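/- arXiv:1005.0822 — 5 statements merged into one kernel-verified Lean document; each statement's English description precedes it below -/
import Mathlib

section
/- Let (A,τ) be a tracial *-algebra. For every even positive integer p and all a, b ∈ A, ‖a + b‖_p ≤ ‖a‖_{ψ(p)} + ‖b‖_{ψ(p)}, where ψ(p) := φ(2φ(p/2) + 4) and φ(m) = 2^{m/2−1} for even m, φ(m) = φ(m+1) = 2^{(m+1)/2−1} for odd m. -/
open scoped ComplexOrder

noncomputable section

set_option linter.unusedSectionVars false

/-- A positive trace on a unital complex `*`-algebra: a `ℂ`-linear functional
with `τ(1) = 1`, `τ(a*a) ≥ 0` (a nonnegative real) and `τ(ab) = τ(ba)`. -/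
def IsTrace {A : Type*} [Ring A] [Algebra ℂ A] [StarRing A] [StarModule ℂ A]
    (τ : A →ₗ[ℂ] ℂ) : Prop :=
  τ 1 = 1 ∧ (∀ a, 0 ≤ τ (star a * a)) ∧ (∀ a b, τ (a * b) = τ (b * a))

/-- For even `p`, the `p`-norm `‖a‖_p = τ((a*a)^{p/2})^{1/p}` associated to a
trace `τ` (the value `τ((a*a)^{p/2})` is a nonnegative real, recorded via its
real part). -/
def pnorm {A : Type*} [Ring A] [Algebra ℂ A] [StarRing A] [StarModule ℂ A]
    (τ : A →ₗ[ℂ] ℂ) (p : ℕ) (a : A) : ℝ :=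
  (τ ((star a * a) ^ (p / 2))).re ^ (1 / (p : ℝ))

/-- `φ(n) = 2^{n/2-1}` for even `n`, and `φ(n) = φ(n+1) = 2^{(n+1)/2-1}` for odd `n`. -/
def phi (m : ℕ) : ℕ := if Even m then 2 ^ (m / 2 - 1) else 2 ^ ((m + 1) / 2 - 1)

/-- `ψ(p) = φ(2φ(p/2) + 4)`. -/
def psi (p : ℕ) : ℕ := phi (2 * phi (p / 2) + 4)

lemma re_sq_le_abs_sq (w : ℂ) : (w.re)^2 ≤ (norm w)^2 := by
  calc (w.re)^2 = |w.re|^2 := (sq_abs _).symm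
    _ ≤ (norm w)^2 := by
        have h := Complex.abs_re_le_norm w
        exact pow_le_pow_left₀ (abs_nonneg _) h 2

namespace MinkAux

variable {A : Type*} [Ring A] [Algebra ℂ A] [StarRing A] [StarModule ℂ A]

section basic

variable (τ : A →ₗ[ℂ] ℂ) (hτ : IsTrace τ)

/-- Sharp two-factor power inequality, squared form. -/
def SP (τ : A →ₗ[ℂ] ℂ) (t : ℕ) : Prop :=
  ∀ d c : A, ((τ (((star d * d) * (star c * c))^(2^t))).re)^2
    ≤ (τ ((star d * d)^(2^(t+1)))).re * (τ ((star c * c)^(2^(t+1)))).re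

def VP (τ : A →ₗ[ℂ] ℂ) (i k : ℕ) : Prop :=
  ∀ a : A, (τ (((star a)^(2^i) * a^(2^i))^(2^k))).re
    ≤ (τ ((star a * a)^(2^(i+k)))).re

lemma mul_pow_shift (x y : A) (n : ℕ) : (x*y)^n * x = x * (y*x)^n := by
  induction n with
  | zero => simp
  | succ n ih =>
    rw [pow_succ', mul_assoc, ih, pow_succ']
    simp only [mul_assoc]

include hτ

lemma tr_mul (x y : A) : τ (x*y) = τ (y*x) := hτ.2.2 x y

lemma TR (x y : A) (n : ℕ) : τ ((x*y)^n) = τ ((y*x)^n) := by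
  cases n with
  | zero => simp
  | succ n =>
    have h1 : (x*y)^(n+1) = x * ((y*x)^n * y) := by
      rw [pow_succ, ← mul_assoc, mul_pow_shift, mul_assoc]
    have h2 : (y*x)^(n+1) = ((y*x)^n * y) * x := by
      rw [pow_succ, mul_assoc]
    rw [h1, h2, tr_mul τ hτ]

lemma pos_re (x : A) : 0 ≤ (τ (star x * x)).re := by
  have := hτ.2.1 x
  rw [Complex.le_def] at this
  simpa using this.1

lemma pos_im (x : A) : (τ (star x * x)).im = 0 := by
  have := hτ.2.1 x
  rw [Complex.le_def] at this
  simpa using this.2.symm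

lemma pow_pos_re (c : A) (n : ℕ) : 0 ≤ (τ ((star c * c)^n)).re := by
  set s : A := star c * c with hs
  have hstar_s : star s = s := by simp [hs, mul_assoc]
  rcases Nat.even_or_odd n with ⟨k, hk⟩ | ⟨k, hk⟩
  · have h1 : s ^ n = star (s^k) * (s^k) := by
      rw [star_pow, hstar_s, ← pow_add, hk]
    rw [h1]; exact pos_re τ hτ _
  · have h1 : s ^ n = star (c * s^k) * (c * s^k) := by
      rw [star_mul, star_pow, hstar_s, mul_assoc, ← mul_assoc (star c) c (s^k), ← hs,
        ← pow_succ', ← pow_add]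
      congr 1
      omega
    rw [h1]; exact pos_re τ hτ _

lemma herm (x y : A) : τ (star y * x) = (starRingEnd ℂ) (τ (star x * y)) := by
  have expand : ∀ u v : A, τ (star (u + v) * (u + v))
      = τ (star u * u) + τ (star u * v) + τ (star v * u) + τ (star v * v) := by
    intro u v
    rw [star_add, add_mul, mul_add, mul_add]
    simp only [map_add]
    ring
  have h1 : (τ (star x * y)).im + (τ (star y * x)).im = 0 := by
    have := pos_im τ hτ (x + y)
    rw [expand x y] at this
    simp only [Complex.add_im, pos_im τ hτ x, pos_im τ hτ y] at this
    linarith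
  have hxy : τ (star x * (Complex.I • y)) = Complex.I * τ (star x * y) := by
    rw [mul_smul_comm, map_smul]; simp
  have hyx : τ (star (Complex.I • y) * x) = -(Complex.I * τ (star y * x)) := by
    rw [star_smul, smul_mul_assoc, map_smul]
    simp [Complex.conj_I]
  have hyy : τ (star (Complex.I • y) * (Complex.I • y)) = τ (star y * y) := by
    rw [star_smul, smul_mul_assoc, mul_smul_comm, map_smul, map_smul]
    simp only [smul_eq_mul, ← mul_assoc]
    rw [Complex.star_def, Complex.conj_I, neg_mul, Complex.I_mul_I, neg_neg, one_mul]
  have h2 : (τ (star x * y)).re - (τ (star y * x)).re = 0 := by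
    have := pos_im τ hτ (x + Complex.I • y)
    rw [expand x (Complex.I • y), hxy, hyx, hyy] at this
    simp only [Complex.add_im, Complex.neg_im, Complex.mul_im, Complex.I_re, Complex.I_im,
      pos_im τ hτ x, pos_im τ hτ y] at this
    simp at this
    linarith
  apply Complex.ext
  · simp only [Complex.conj_re]; linarith
  · simp only [Complex.conj_im]; linarith

/-- Cauchy-Schwarz for the positive hermitian form `(x,y) ↦ τ(x* y)`. -/
lemma cs (x y : A) : (norm (τ (star x * y)))^2
    ≤ (τ (star x * x)).re * (τ (star y * y)).re := by
  set z := τ (star x * y) with hz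
  by_cases h0 : z = 0
  · rw [h0]
    simpa using mul_nonneg (pos_re τ hτ x) (pos_re τ hτ y)
  · set Qx := (τ (star x * x)).re with hQx
    set Qy := (τ (star y * y)).re with hQy
    set c : ℂ := (starRingEnd ℂ) z / (norm z : ℂ) with hc
    have habs : norm z ≠ 0 := norm_ne_zero_iff.mpr h0
    have hcz : c * z = (norm z : ℂ) := by
      rw [hc, div_mul_eq_mul_div, mul_comm, Complex.mul_conj, Complex.normSq_eq_norm_sq]
      push_cast
      field_simp
    have hcc : (starRingEnd ℂ) c * c = 1 := by
      have h1 : norm c = 1 := by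
        simp [hc, map_div₀, habs]
      rw [mul_comm, Complex.mul_conj, Complex.normSq_eq_norm_sq, h1]
      norm_num
    have key : ∀ t : ℝ, 0 ≤ Qx * (t * t) + (2 * norm z) * t + Qy := by
      intro t
      have hpos := pos_re τ hτ ((t:ℂ) • x + c • y)
      have e : star ((t:ℂ) • x + c • y) * ((t:ℂ) • x + c • y)
          = ((t:ℂ) * (t:ℂ)) • (star x * x) + ((t:ℂ) * c) • (star x * y)
            + ((t:ℂ) * (starRingEnd ℂ) c) • (star y * x)
            + ((starRingEnd ℂ) c * c) • (star y * y) := by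
        rw [star_add, star_smul, star_smul, add_mul, mul_add, mul_add]
        simp only [smul_mul_assoc, mul_smul_comm, smul_smul, RCLike.star_def,
          Complex.conj_ofReal]
        rw [mul_comm c ((starRingEnd ℂ) c), mul_comm c ((t:ℂ))]
        abel
      have hτval : τ (star ((t:ℂ) • x + c • y) * ((t:ℂ) • x + c • y))
          = ((t*t : ℝ) : ℂ) * τ (star x * x) + 2 * (norm z : ℂ) * (t:ℂ)
            + τ (star y * y) := by
        rw [e]
        simp only [map_add, map_smul, smul_eq_mul]
        rw [herm τ hτ x y, ← hz]
        have hcz' : (starRingEnd ℂ) c * (starRingEnd ℂ) z = (norm z : ℂ) := by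
          rw [← map_mul, hcz, Complex.conj_ofReal]
        push_cast
        linear_combination (t:ℂ) * hcz + (t:ℂ) * hcz' + τ (star y * y) * hcc
      rw [hτval] at hpos
      have hre : (((t*t : ℝ) : ℂ) * τ (star x * x) + 2 * (norm z : ℂ) * (t:ℂ)
            + τ (star y * y)).re
          = Qx * (t * t) + (2 * norm z) * t + Qy := by
        simp only [Complex.add_re, Complex.mul_re, Complex.ofReal_re, Complex.ofReal_im,
          Complex.mul_im, Complex.re_ofNat, Complex.im_ofNat, hQx, hQy]
        ring
      rw [hre] at hpos
      exact hpos
    have hd := discrim_le_zero key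
    rw [discrim] at hd
    nlinarith [norm_nonneg z]

lemma SP_zero : SP τ 0 := by
  intro d c
  have hD : star (star d * d) = star d * d := by
    rw [star_mul, star_star]
  have hC : star (star c * c) = star c * c := by
    rw [star_mul, star_star]
  have h := cs τ hτ (star d * d) (star c * c)
  rw [hD, hC] at h
  have h2 := re_sq_le_abs_sq (τ ((star d * d) * (star c * c)))
  have e1 : (star d * d) * (star d * d) = (star d * d)^2 := by rw [pow_two]
  have e2 : (star c * c) * (star c * c) = (star c * c)^2 := by rw [pow_two]
  rw [e1, e2] at h
  calc ((τ (((star d * d) * (star c * c))^(2^0))).re)^2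
      = ((τ ((star d * d) * (star c * c))).re)^2 := by norm_num
    _ ≤ (norm (τ ((star d * d) * (star c * c))))^2 := h2
    _ ≤ (τ ((star d * d)^2)).re * (τ ((star c * c)^2)).re := h
    _ = (τ ((star d * d)^(2^(0+1)))).re * (τ ((star c * c)^(2^(0+1)))).re := by norm_num

lemma Vlem : ∀ i k : ℕ, (∀ j, j ≤ i + k → SP τ j) → VP τ i k := by
  intro i
  induction i with
  | zero =>
    intro k _ a
    simp only [pow_zero, pow_one, Nat.zero_add]
    exact le_refl _
  | succ i ih =>
    intro k hS a
    have hSk : SP τ k := hS k (by omega)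
    -- abbreviations
    have h2s : (2:ℕ)^(i+1) = 2^i + 2^i := by rw [pow_succ]; omega
    -- X := (star a)^(2^i) * a^(2^i), Y := a^(2^i) * (star a)^(2^i)
    have hXY : ((star a)^(2^i) * a^(2^i)) * (a^(2^i) * (star a)^(2^i))
        = (star a)^(2^i) * ((a^(2^i) * a^(2^i)) * (star a)^(2^i)) := by
      simp only [mul_assoc]
    have eXY : τ ((((star a)^(2^i) * a^(2^i)) * (a^(2^i) * (star a)^(2^i)))^(2^k))
        = τ (((star a)^(2^(i+1)) * a^(2^(i+1)))^(2^k)) := by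
      rw [hXY, TR τ hτ]
      have e1 : (a^(2^i) * a^(2^i)) * (star a)^(2^i) * (star a)^(2^i)
          = a^(2^(i+1)) * (star a)^(2^(i+1)) := by
        rw [h2s, pow_add, pow_add]
        simp only [mul_assoc]
      rw [e1, TR τ hτ]
    -- apply SP k with d := a^(2^i), c := (star a)^(2^i)
    have hsp := hSk (a^(2^i)) ((star a)^(2^i))
    rw [star_pow, star_pow, star_star] at hsp
    -- TY = TX
    have eYX : τ ((a^(2^i) * (star a)^(2^i))^(2^(k+1)))
        = τ (((star a)^(2^i) * a^(2^i))^(2^(k+1))) := TR τ hτ _ _ _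
    rw [eYX, eXY] at hsp
    -- positivity of TX
    have hTX : 0 ≤ (τ (((star a)^(2^i) * a^(2^i))^(2^(k+1)))).re := by
      have := pow_pos_re τ hτ (a^(2^i)) (2^(k+1))
      rwa [star_pow] at this
    -- v ≤ TX
    have hv : (τ (((star a)^(2^(i+1)) * a^(2^(i+1)))^(2^k))).re
        ≤ (τ (((star a)^(2^i) * a^(2^i))^(2^(k+1)))).re := by
      nlinarith [hsp, hTX]
    -- recurse
    have hrec := ih (k+1) (fun j hj => hS j (by omega)) a
    have efin : (2:ℕ)^(i+(k+1)) = 2^((i+1)+k) := by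
      congr 1
      omega
    rw [efin] at hrec
    exact le_trans hv hrec

lemma Slem : ∀ t, SP τ t := by
  intro t
  induction t using Nat.strong_induction_on with
  | _ t IH =>
    match t, IH with
    | 0, _ => exact SP_zero τ hτ
    | (t+1), IH =>
      intro d c
      set D := star d * d with hD
      set C := star c * c with hC
      have hstarD : star D = D := by rw [hD, star_mul, star_star]
      have hstarC : star C = C := by rw [hC, star_mul, star_star]
      -- Z := (D*C)^(2^t)
      have hZsplit : (D*C)^(2^(t+1)) = (D*C)^(2^t) * (D*C)^(2^t) := by
        have h2 : (2:ℕ)^(t+1) = 2^t + 2^t := by rw [pow_succ, mul_two]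
        rw [h2, pow_add]
      have hstarZ : star ((D*C)^(2^t)) = (C*D)^(2^t) := by
        rw [star_pow, star_mul, hstarD, hstarC]
      -- Cauchy-Schwarz
      have hcs := cs τ hτ (star ((D*C)^(2^t))) ((D*C)^(2^t))
      rw [star_star] at hcs
      have htr : τ ((D*C)^(2^t) * star ((D*C)^(2^t)))
          = τ (star ((D*C)^(2^t)) * (D*C)^(2^t)) := tr_mul τ hτ _ _
      rw [htr] at hcs
      have habs2 := re_sq_le_abs_sq (τ ((D*C)^(2^t) * (D*C)^(2^t)))
      -- T(star Z * Z) ≥ 0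
      have hTZ : 0 ≤ (τ (star ((D*C)^(2^t)) * (D*C)^(2^t))).re := pos_re τ hτ _
      -- VP t 0 applied to A' := D*C
      have hvp := Vlem τ hτ t 0 (fun j hj => IH j (by omega)) (D*C)
      simp only [pow_zero, pow_one, Nat.add_zero] at hvp
      have hZid : star ((D*C)^(2^t)) * (D*C)^(2^t)
          = (star (D*C))^(2^t) * (D*C)^(2^t) := by rw [star_pow]
      -- rewrite star A' * A' inside hvp target
      have hA'id : τ ((star (D*C) * (D*C))^(2^t)) = τ ((D^2 * C^2)^(2^t)) := by
        have e1 : star (D*C) * (D*C) = C * (D^2 * C) := by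
          rw [star_mul, hstarD, hstarC, pow_two]
          simp only [mul_assoc]
        rw [e1, TR τ hτ]
        have e2 : (D^2 * C) * C = D^2 * C^2 := by
          rw [pow_two, pow_two]
          simp only [mul_assoc]
        rw [e2]
      rw [hZid] at hcs hTZ
      rw [hA'id] at hvp
      have hvp' : (τ ((star (D*C))^(2^t) * (D*C)^(2^t))).re
          ≤ (τ ((D^2 * C^2)^(2^t))).re := hvp
      -- SP t applied to (D, C)
      have hsp := IH t (by omega) D C
      rw [hstarD, hstarC] at hsp
      have eDD : D * D = D^2 := by rw [pow_two]
      have eCC : C * C = C^2 := by rw [pow_two]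
      rw [eDD, eCC] at hsp
      have hpw : ∀ x : A, (x^2)^(2^(t+1)) = x^(2^(t+2)) := by
        intro x
        rw [← pow_mul]
        congr 1
        rw [pow_succ 2 (t+1)]
        ring
      rw [hpw D, hpw C] at hsp
      -- nonneg of products
      have hXnn : 0 ≤ (τ ((D^2 * C^2)^(2^t))).re := le_trans hTZ hvp'
      -- combine
      have h1 : ((τ ((D*C)^(2^(t+1)))).re)^2
          ≤ ((τ ((star (D*C))^(2^t) * (D*C)^(2^t))).re)^2 := by
        rw [hZsplit]
        nlinarith [hcs, habs2, hTZ]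
      calc ((τ ((D*C)^(2^(t+1)))).re)^2
          ≤ ((τ ((star (D*C))^(2^t) * (D*C)^(2^t))).re)^2 := h1
        _ ≤ ((τ ((D^2 * C^2)^(2^t))).re)^2 := by nlinarith [hTZ, hvp', hXnn]
        _ ≤ (τ (D^(2^(t+2)))).re * (τ (C^(2^(t+2)))).re := hsp
        _ = (τ (D^(2^(t+1+1)))).re * (τ (C^(2^(t+1+1)))).re := by norm_num

lemma pnorm_nonneg (q : ℕ) (x : A) : 0 ≤ pnorm τ q x :=
  Real.rpow_nonneg (pow_pos_re τ hτ x _) _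

lemma pnorm_pow (q : ℕ) (hq : q ≠ 0) (x : A) :
    (pnorm τ q x)^q = (τ ((star x * x)^(q/2))).re := by
  unfold pnorm
  rw [← Real.rpow_natCast ((τ ((star x * x)^(q/2))).re ^ (1/(q:ℝ))) q,
    ← Real.rpow_mul (pow_pos_re τ hτ x _)]
  rw [one_div, inv_mul_cancel₀ (by exact_mod_cast hq)]
  exact Real.rpow_one _

lemma pnorm_one (q : ℕ) : pnorm τ q (1:A) = 1 := by
  unfold pnorm
  simp [hτ.1]

lemma pnorm_star (q : ℕ) (x : A) : pnorm τ q (star x) = pnorm τ q x := by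
  unfold pnorm
  rw [star_star, TR τ hτ x (star x) (q/2)]

lemma pnorm_mono_step (t : ℕ) (ht : 1 ≤ t) (x : A) :
    pnorm τ (2^t) x ≤ pnorm τ (2^(t+1)) x := by
  obtain ⟨u, rfl⟩ : ∃ u, t = u + 1 := ⟨t - 1, by omega⟩
  set s : A := star x * x with hs
  have hstar_s : star s = s := by rw [hs, star_mul, star_star]
  have hdiv1 : (2:ℕ)^(u+1)/2 = 2^u := by
    rw [pow_succ, Nat.mul_div_cancel _ (by norm_num)]
  have hdiv2 : (2:ℕ)^(u+1+1)/2 = 2^(u+1) := by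
    rw [pow_succ _ (u+1), Nat.mul_div_cancel _ (by norm_num)]
  set a := (τ (s^(2^u))).re with ha
  set b := (τ (s^(2^(u+1)))).re with hb
  have hann : 0 ≤ a := pow_pos_re τ hτ x _
  have hbnn : 0 ≤ b := pow_pos_re τ hτ x _
  have hab : a^2 ≤ b := by
    have hcs := cs τ hτ (s^(2^u)) 1
    rw [star_pow, hstar_s, mul_one, star_one, one_mul, hτ.1] at hcs
    have hpp : s^(2^u) * s^(2^u) = s^(2^(u+1)) := by
      rw [← pow_add, pow_succ, mul_two]
    rw [hpp] at hcs
    have habs := re_sq_le_abs_sq (τ (s^(2^u)))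
    simp only [Complex.one_re, mul_one] at hcs
    calc a^2 = ((τ (s^(2^u))).re)^2 := by rw [ha]
      _ ≤ (norm (τ (s^(2^u))))^2 := habs
      _ ≤ b := hcs
  have e1 : pnorm τ (2^(u+1)) x = a ^ (1/((2:ℝ)^(u+1))) := by
    unfold pnorm
    rw [hdiv1, ← ha]
    norm_num
  have e2 : pnorm τ (2^(u+1+1)) x = b ^ (1/((2:ℝ)^(u+1+1))) := by
    unfold pnorm
    rw [hdiv2, ← hb]
    norm_num
  rw [e1, e2]
  have key : a ^ (1/((2:ℝ)^(u+1))) = (a^(2:ℕ)) ^ (1/((2:ℝ)^(u+1+1))) := by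
    rw [← Real.rpow_natCast a 2, ← Real.rpow_mul hann]
    congr 1
    push_cast
    rw [pow_succ ((2:ℝ)) (u+1)]
    have h2 : ((2:ℝ))^(u+1) ≠ 0 := by positivity
    field_simp
  rw [key]
  exact Real.rpow_le_rpow (by positivity) hab (by positivity)

lemma pnorm_mono (t t' : ℕ) (ht : 1 ≤ t) (htt' : t ≤ t') (x : A) :
    pnorm τ (2^t) x ≤ pnorm τ (2^t') x := by
  induction t', htt' using Nat.le_induction with
  | base => exact le_refl _
  | succ n hn ih => exact le_trans ih (pnorm_mono_step τ hτ n (by omega) x)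

/-- Two-factor Hölder inequality at powers of two. -/
lemma holder (t : ℕ) (ht : 1 ≤ t) (y z : A) :
    pnorm τ (2^t) (y*z) ≤ pnorm τ (2^(t+1)) y * pnorm τ (2^(t+1)) z := by
  obtain ⟨u, rfl⟩ : ∃ u, t = u + 1 := ⟨t - 1, by omega⟩
  have hdiv1 : (2:ℕ)^(u+1)/2 = 2^u := by
    rw [pow_succ, Nat.mul_div_cancel _ (by norm_num)]
  have hdiv2 : (2:ℕ)^(u+1+1)/2 = 2^(u+1) := by
    rw [pow_succ _ (u+1), Nat.mul_div_cancel _ (by norm_num)]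
  -- W = T((D·C)^(2^u)) where D = star y * y, C = z * star z
  have eW : τ ((star (y*z) * (y*z))^(2^u))
      = τ (((star y * y) * (z * star z))^(2^u)) := by
    have e0 : star (y*z) * (y*z) = star z * ((star y * y) * z) := by
      rw [star_mul]
      simp only [mul_assoc]
    rw [e0, TR τ hτ]
    have e1 : ((star y * y) * z) * star z = (star y * y) * (z * star z) := by
      simp only [mul_assoc]
    rw [e1]
  -- SP u applied to (y, star z)
  have hsp := Slem τ hτ u y (star z)
  rw [star_star] at hsp
  rw [← eW] at hsp
  -- rewrite C-trace
  have eC : τ ((z * star z)^(2^(u+1))) = τ ((star z * z)^(2^(u+1))) := TR τ hτ _ _ _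
  rw [eC] at hsp
  -- convert to pnorms
  have hyz := pnorm_pow τ hτ (2^(u+1)) (by positivity) (y*z)
  have hy := pnorm_pow τ hτ (2^(u+1+1)) (by positivity) y
  have hz := pnorm_pow τ hτ (2^(u+1+1)) (by positivity) z
  rw [hdiv1] at hyz
  rw [hdiv2] at hy hz
  -- hsp : (T)^2 ≤ Ty * Tz  with T = pnorm^q etc.
  rw [← hyz, ← hy, ← hz] at hsp
  -- now conclude
  have hq : (2:ℕ)^(u+1) ≠ 0 := by positivity
  have hsq : ∀ w : ℝ, w^(2^(u+1+1)) = (w^(2^(u+1)))^2 := by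
    intro w
    rw [pow_succ 2 (u+1), pow_mul]
  rw [hsq (pnorm τ (2^(u+1+1)) y), hsq (pnorm τ (2^(u+1+1)) z)] at hsp
  have hB : ((pnorm τ (2^(u+1)) (y*z))^(2^(u+1)))^2
      ≤ ((pnorm τ (2^(u+1+1)) y ^ (2^(u+1))) * (pnorm τ (2^(u+1+1)) z ^ (2^(u+1))))^2 := by
    rw [mul_pow]
    exact hsp
  have hBnn : 0 ≤ (pnorm τ (2^(u+1+1)) y ^ (2^(u+1))) * (pnorm τ (2^(u+1+1)) z ^ (2^(u+1))) :=
    mul_nonneg (pow_nonneg (pnorm_nonneg τ hτ _ y) _) (pow_nonneg (pnorm_nonneg τ hτ _ z) _)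
  have hkey := le_of_pow_le_pow_left₀ (two_ne_zero) hBnn hB
  rw [← mul_pow] at hkey
  exact le_of_pow_le_pow_left₀ hq
    (mul_nonneg (pnorm_nonneg τ hτ _ y) (pnorm_nonneg τ hτ _ z)) hkey

/-- bound for pnorm of a product of a list of elements -/
lemma prod_bound : ∀ (l : List A) (t r : ℕ), 1 ≤ t → t + l.length - 1 ≤ r →
    pnorm τ (2^t) l.prod ≤ (l.map (fun z => pnorm τ (2^r) z)).prod := by
  intro l
  induction l with
  | nil =>
    intro t r ht hr
    simp [pnorm_one τ hτ]
  | cons z l ih =>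
    intro t r ht hr
    cases l with
    | nil =>
      simp only [List.prod_cons, List.prod_nil, mul_one, List.map_cons, List.map_nil]
      have htr : t ≤ r := by
        simp only [List.length_cons, List.length_nil] at hr
        omega
      exact pnorm_mono τ hτ t r ht htr z
    | cons w l' =>
      have hlen : (w :: l').length = l'.length + 1 := by simp
      have hr' : t + (z :: w :: l').length - 1 = t + l'.length + 1 := by simp; omega
      rw [List.prod_cons]
      have h1 := holder τ hτ t ht z (w :: l').prod
      have h2 := ih (t+1) r (by omega) (by
        simp only [List.length_cons]
        simp only [List.length_cons] at hr
        omega)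
      have h3 : pnorm τ (2^(t+1)) z ≤ pnorm τ (2^r) z := by
        apply pnorm_mono τ hτ (t+1) r (by omega) (by
          simp only [List.length_cons] at hr
          omega) z
      calc pnorm τ (2^t) (z * (w :: l').prod)
          ≤ pnorm τ (2^(t+1)) z * pnorm τ (2^(t+1)) (w :: l').prod := h1
        _ ≤ pnorm τ (2^r) z * ((w :: l').map (fun z => pnorm τ (2^r) z)).prod := by
            apply mul_le_mul h3 h2 (pnorm_nonneg τ hτ _ _)
            exact pnorm_nonneg τ hτ _ _
        _ = ((z :: w :: l').map (fun z => pnorm τ (2^r) z)).prod := by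
            simp

lemma nonneg_map_prod (l : List A) (r : ℕ) :
    0 ≤ (l.map (fun z => pnorm τ (2^r) z)).prod := by
  induction l with
  | nil => simp
  | cons z l ih =>
    rw [List.map_cons, List.prod_cons]
    exact mul_nonneg (pnorm_nonneg τ hτ _ _) ih

/-- trace of a product of a list, bounded by product of pnorms -/
lemma trace_prod_bound (l : List A) (r : ℕ) (hr1 : 1 ≤ r) (hr : (l.length + 1)/2 ≤ r) :
    |(τ l.prod).re| ≤ (l.map (fun z => pnorm τ (2^r) z)).prod := by
  rcases eq_or_ne l [] with rfl | hne
  · simp [hτ.1]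
  · have hlen : 1 ≤ l.length := List.length_pos_iff.mpr hne
    set k := (l.length + 1)/2 with hk
    have hk1 : 1 ≤ k := by omega
    have hkle : k ≤ l.length := by omega
    set l₁ := l.take k with hl₁
    set l₂ := l.drop k with hl₂
    have hlen₁ : l₁.length = k := by
      rw [hl₁, List.length_take]
      omega
    have hlen₂ : l₂.length = l.length - k := by
      rw [hl₂, List.length_drop]
    have hprod : l.prod = l₁.prod * l₂.prod := by
      rw [hl₁, hl₂, ← List.prod_append, List.take_append_drop]
    -- Cauchy-Schwarz
    have hcs := cs τ hτ (star l₁.prod) l₂.prod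
    rw [star_star] at hcs
    have htr : τ (l₁.prod * star l₁.prod) = τ (star l₁.prod * l₁.prod) := tr_mul τ hτ _ _
    rw [htr] at hcs
    have hp₁ : (pnorm τ 2 l₁.prod)^2 = (τ (star l₁.prod * l₁.prod)).re := by
      have := pnorm_pow τ hτ 2 (by norm_num) l₁.prod
      simpa using this
    have hp₂ : (pnorm τ 2 l₂.prod)^2 = (τ (star l₂.prod * l₂.prod)).re := by
      have := pnorm_pow τ hτ 2 (by norm_num) l₂.prod
      simpa using this
    rw [← hp₁, ← hp₂] at hcs
    have habs : norm (τ (l₁.prod * l₂.prod))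
        ≤ pnorm τ 2 l₁.prod * pnorm τ 2 l₂.prod := by
      have hBnn : 0 ≤ pnorm τ 2 l₁.prod * pnorm τ 2 l₂.prod :=
        mul_nonneg (pnorm_nonneg τ hτ _ _) (pnorm_nonneg τ hτ _ _)
      apply le_of_pow_le_pow_left₀ (two_ne_zero) hBnn
      rw [mul_pow]
      exact hcs
    -- bound the two pnorms
    have hb₁ : pnorm τ 2 l₁.prod ≤ (l₁.map (fun z => pnorm τ (2^r) z)).prod := by
      have := prod_bound τ hτ l₁ 1 r (le_refl 1) (by rw [hlen₁]; omega)
      simpa using this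
    have hb₂ : pnorm τ 2 l₂.prod ≤ (l₂.map (fun z => pnorm τ (2^r) z)).prod := by
      have := prod_bound τ hτ l₂ 1 r (le_refl 1) (by rw [hlen₂]; omega)
      simpa using this
    have hsplit : (l.map (fun z => pnorm τ (2^r) z)).prod
        = (l₁.map (fun z => pnorm τ (2^r) z)).prod * (l₂.map (fun z => pnorm τ (2^r) z)).prod := by
      conv_lhs => rw [← List.take_append_drop k l]
      rw [List.map_append, List.prod_append]
    calc |(τ l.prod).re| ≤ norm (τ l.prod) := Complex.abs_re_le_norm _
      _ = norm (τ (l₁.prod * l₂.prod)) := by rw [hprod]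
      _ ≤ pnorm τ 2 l₁.prod * pnorm τ 2 l₂.prod := habs
      _ ≤ (l₁.map (fun z => pnorm τ (2^r) z)).prod * (l₂.map (fun z => pnorm τ (2^r) z)).prod := by
          apply mul_le_mul hb₁ hb₂ (pnorm_nonneg τ hτ _ _) (nonneg_map_prod τ hτ _ _)
      _ = (l.map (fun z => pnorm τ (2^r) z)).prod := hsplit.symm

end basic

/-- expansion of a power of a sum into words -/
lemma pow_sum_expand {κ : Type*} [Fintype κ] [DecidableEq κ] (y : κ → A) (m : ℕ) :
    (∑ j, y j)^m = ∑ f : Fin m → κ, (List.ofFn (fun i => y (f i))).prod := by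
  induction m with
  | zero =>
    simp only [pow_zero, List.ofFn_zero, List.prod_nil]
    rw [Finset.sum_const, Finset.card_univ]
    have : Fintype.card (Fin 0 → κ) = 1 := by simp
    rw [this, one_smul]
  | succ m ih =>
    rw [pow_succ', ih, Finset.sum_mul_sum]
    have hdouble : ∑ i : κ, ∑ j : Fin m → κ, y i * (List.ofFn fun i2 => y (j i2)).prod
        = ∑ q : κ × (Fin m → κ), y q.1 * (List.ofFn fun i2 => y (q.2 i2)).prod :=
      (Fintype.sum_prod_type
        (f := fun q : κ × (Fin m → κ) => y q.1 * (List.ofFn fun i2 => y (q.2 i2)).prod)).symm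
    rw [hdouble]
    refine (Fintype.sum_equiv (Fin.consEquiv (fun _ => κ)).symm
      (fun f' => (List.ofFn fun i => y (f' i)).prod)
      (fun q => y q.1 * (List.ofFn fun i2 => y (q.2 i2)).prod) ?_).symm
    intro f'
    rw [List.ofFn_succ, List.prod_cons]
    rfl

end MinkAux

open MinkAux in
/-- Minkowski type inequality.  For a tracial `*`-algebra
`(A,τ)`, an even positive integer `p` and `a, b ∈ A`,
`‖a+b‖_p ≤ ‖a‖_{ψ(p)} + ‖b‖_{ψ(p)}` where `ψ(p) = φ(2φ(p/2)+4)`. -/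
theorem minkowski_type_inequality
    {A : Type*} [Ring A] [Algebra ℂ A] [StarRing A] [StarModule ℂ A]
    (τ : A →ₗ[ℂ] ℂ) (hτ : IsTrace τ)
    (p : ℕ) (hp : Even p) (hp0 : 0 < p) (a b : A) :
    pnorm τ p (a + b) ≤ pnorm τ (psi p) a + pnorm τ (psi p) b := by
  classical
  obtain ⟨m, hm⟩ := hp
  have hm1 : 1 ≤ m := by omega
  have hpm : p / 2 = m := by omega
  set t₀ := (m+1)/2 with ht₀
  have ht₀1 : 1 ≤ t₀ := by omega
  have hphi : phi m = 2^(t₀-1) := by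
    rw [phi]
    rcases Nat.even_or_odd m with he | ho
    · rw [if_pos he]
      obtain ⟨k, hk⟩ := he
      congr 1
      omega
    · rw [if_neg (Nat.not_even_iff_odd.mpr ho)]
  have hψ : psi p = 2^(phi m + 1) := by
    rw [psi, hpm, phi]
    rw [if_pos ⟨phi m + 2, by ring⟩]
    congr 1
    omega
  have htF : t₀ + 1 ≤ phi m + 1 := by
    rw [hphi]
    have h := @Nat.lt_two_pow_self (t₀ - 1)
    omega
  set Na := pnorm τ (psi p) a with hNa
  set Nb := pnorm τ (psi p) b with hNb
  have hNan : 0 ≤ Na := pnorm_nonneg τ hτ _ _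
  have hNbn : 0 ≤ Nb := pnorm_nonneg τ hτ _ _
  set e : Fin 2 → A := ![a, b] with he
  have hexp : star (a+b) * (a+b) = ∑ q : Fin 2 × Fin 2, star (e q.1) * e q.2 := by
    have h1 : star (a+b) * (a+b) = star a * a + star a * b + (star b * a + star b * b) := by
      rw [star_add, add_mul, mul_add, mul_add]
    rw [h1, Fintype.sum_prod_type]
    simp only [Fin.sum_univ_two, he, Matrix.cons_val_zero, Matrix.cons_val_one, Matrix.head_cons]
  have hword : (star (a+b) * (a+b))^m
      = ∑ f : Fin m → Fin 2 × Fin 2, (List.ofFn (fun i => star (e (f i).1) * e (f i).2)).prod := by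
    rw [hexp]
    exact pow_sum_expand (fun q : Fin 2 × Fin 2 => star (e q.1) * e q.2) m
  have hperword : ∀ f : Fin m → Fin 2 × Fin 2,
      (τ ((List.ofFn (fun i => star (e (f i).1) * e (f i).2)).prod)).re
        ≤ ∏ i : Fin m, (pnorm τ (psi p) (e (f i).1) * pnorm τ (psi p) (e (f i).2)) := by
    intro f
    have hlen : (List.ofFn (fun i => star (e (f i).1) * e (f i).2)).length = m := by simp
    have hL := trace_prod_bound τ hτ (List.ofFn (fun i => star (e (f i).1) * e (f i).2))
      t₀ ht₀1 (by rw [hlen])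
    have hmap : ((List.ofFn (fun i => star (e (f i).1) * e (f i).2)).map
          (fun z => pnorm τ (2^t₀) z)).prod
        = ∏ i : Fin m, pnorm τ (2^t₀) (star (e (f i).1) * e (f i).2) := by
      rw [List.map_ofFn, List.prod_ofFn]
      rfl
    have hletter : ∀ i : Fin m, pnorm τ (2^t₀) (star (e (f i).1) * e (f i).2)
        ≤ pnorm τ (psi p) (e (f i).1) * pnorm τ (psi p) (e (f i).2) := by
      intro i
      have h1 := holder τ hτ t₀ ht₀1 (star (e (f i).1)) (e (f i).2)
      have h2 : pnorm τ (2^(t₀+1)) (star (e (f i).1)) ≤ pnorm τ (psi p) (e (f i).1) := by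
        calc pnorm τ (2^(t₀+1)) (star (e (f i).1))
            ≤ pnorm τ (2^(phi m + 1)) (star (e (f i).1)) :=
              pnorm_mono τ hτ _ _ (by omega) htF _
          _ = pnorm τ (psi p) (e (f i).1) := by rw [pnorm_star τ hτ, hψ]
      have h3 : pnorm τ (2^(t₀+1)) (e (f i).2) ≤ pnorm τ (psi p) (e (f i).2) := by
        calc pnorm τ (2^(t₀+1)) (e (f i).2)
            ≤ pnorm τ (2^(phi m + 1)) (e (f i).2) :=
              pnorm_mono τ hτ _ _ (by omega) htF _
          _ = pnorm τ (psi p) (e (f i).2) := by rw [hψ]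
      calc pnorm τ (2^t₀) (star (e (f i).1) * e (f i).2)
          ≤ pnorm τ (2^(t₀+1)) (star (e (f i).1)) * pnorm τ (2^(t₀+1)) (e (f i).2) := h1
        _ ≤ pnorm τ (psi p) (e (f i).1) * pnorm τ (psi p) (e (f i).2) :=
            mul_le_mul h2 h3 (pnorm_nonneg τ hτ _ _) (pnorm_nonneg τ hτ _ _)
    calc (τ ((List.ofFn (fun i => star (e (f i).1) * e (f i).2)).prod)).re
        ≤ |(τ ((List.ofFn (fun i => star (e (f i).1) * e (f i).2)).prod)).re| := le_abs_self _
      _ ≤ ((List.ofFn (fun i => star (e (f i).1) * e (f i).2)).map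
            (fun z => pnorm τ (2^t₀) z)).prod := hL
      _ = ∏ i : Fin m, pnorm τ (2^t₀) (star (e (f i).1) * e (f i).2) := hmap
      _ ≤ ∏ i : Fin m, (pnorm τ (psi p) (e (f i).1) * pnorm τ (psi p) (e (f i).2)) :=
          Finset.prod_le_prod (fun i _ => pnorm_nonneg τ hτ _ _) (fun i _ => hletter i)
  have hsum : (τ ((star (a+b) * (a+b))^m)).re ≤ (Na + Nb)^p := by
    rw [hword, map_sum, Complex.re_sum]
    refine le_trans (Finset.sum_le_sum (fun f _ => hperword f)) ?_
    have hfactor : ∑ f : Fin m → Fin 2 × Fin 2, ∏ i : Fin m,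
        (pnorm τ (psi p) (e (f i).1) * pnorm τ (psi p) (e (f i).2))
        = (∑ q : Fin 2 × Fin 2, pnorm τ (psi p) (e q.1) * pnorm τ (psi p) (e q.2))^m := by
      have h := Finset.prod_univ_sum (fun _ : Fin m => (Finset.univ : Finset (Fin 2 × Fin 2)))
        (fun _ q => pnorm τ (psi p) (e q.1) * pnorm τ (psi p) (e q.2))
      rw [Fintype.piFinset_univ] at h
      rw [← h, Finset.prod_const, Finset.card_univ, Fintype.card_fin]
    rw [hfactor]
    have hG : (∑ q : Fin 2 × Fin 2, pnorm τ (psi p) (e q.1) * pnorm τ (psi p) (e q.2))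
        = (Na + Nb)^2 := by
      rw [Fintype.sum_prod_type]
      simp only [Fin.sum_univ_two, he, Matrix.cons_val_zero, Matrix.cons_val_one,
        Matrix.head_cons, ← hNa, ← hNb]
      ring
    rw [hG, ← pow_mul]
    have h2m : 2 * m = p := by omega
    rw [h2m]
  have h0 : 0 ≤ (τ ((star (a+b) * (a+b))^m)).re := pow_pos_re τ hτ (a+b) m
  calc pnorm τ p (a+b) = ((τ ((star (a+b) * (a+b))^m)).re) ^ (1/(p:ℝ)) := by
        rw [pnorm, hpm]
    _ ≤ ((Na+Nb)^p) ^ (1/(p:ℝ)) := Real.rpow_le_rpow h0 hsum (by positivity)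
    _ = Na + Nb := by
        rw [← Real.rpow_natCast (Na+Nb) p, ← Real.rpow_mul (by positivity)]
        rw [mul_one_div_cancel (by exact_mod_cast hp0.ne' : (p:ℝ) ≠ 0)]
        exact Real.rpow_one _
end
end

section
/- Let k ≥ 1 and P₁,…,P_m ∈ ℂ⟨X⟩. If Σ_{i=1}^m Pᵢ*Pᵢ ∈ J_k + C_cyc, then Pᵢ ∈ J_k for all 1 ≤ i ≤ m. -/
noncomputable section

/-- The free `*`-algebra `ℂ⟨X⟩` on a set `X` of self-adjoint variables. -/
abbrev FA (X : Type) : Type := FreeAlgebra ℂ X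

/-- Coefficients of a non-commutative polynomial, indexed by words. -/
def coefficient {X : Type} (P : FA X) : FreeMonoid X →₀ ℂ :=
  (FreeAlgebra.equivMonoidAlgebraFreeMonoid P).coeff

/-- The involution on `ℂ⟨X⟩` fixing the variables, reversing words and
conjugating coefficients. -/
def cstar {X : Type} (P : FA X) : FA X :=
  star <| (FreeAlgebra.equivMonoidAlgebraFreeMonoid (R := ℂ) (X := X)).symm <| MonoidAlgebra.ofCoeff <|
    Finsupp.mapRange (starRingEnd ℂ) (map_zero _) (coefficient P)

/-- The ideal `J_k` of polynomials vanishing at every tuple of self-adjoint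
complex `k×k` matrices. -/
def Jset (X : Type) (k : ℕ) : Set (FA X) :=
  {P | ∀ a : X → Matrix (Fin k) (Fin k) ℂ, (∀ i, IsSelfAdjoint (a i)) →
    FreeAlgebra.lift ℂ a P = 0}

/-- The homogeneous part of degree `d` of a non-commutative polynomial. -/
def homPart {X : Type} (d : ℕ) (P : FA X) : FA X :=
  (FreeAlgebra.equivMonoidAlgebraFreeMonoid (R := ℂ) (X := X)).symm
    (MonoidAlgebra.ofCoeff ((coefficient P).filter fun w : FreeMonoid X => FreeMonoid.length w = d))

/-- The span `C_cyc` of all commutators. -/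
def Ccyc (X : Type) : Submodule ℂ (FA X) :=
  Submodule.span ℂ {x | ∃ P Q : FA X, x = P * Q - Q * P}

/-! ### Auxiliary lemmas -/

lemma aux_symm_apply_eq {X : Type} (g : MonoidAlgebra ℂ (FreeMonoid X)) :
    (FreeAlgebra.equivMonoidAlgebraFreeMonoid (R := ℂ) (X := X)).symm g
      = MonoidAlgebra.lift ℂ (FreeAlgebra ℂ X) (FreeMonoid X)
          (FreeMonoid.lift (FreeAlgebra.ι ℂ)) g := rfl

lemma aux_lift_list {X : Type} {A : Type} [Ring A] [Algebra ℂ A] (a : X → A)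
    (l : List X) :
    FreeAlgebra.lift ℂ a ((l.map (FreeAlgebra.ι ℂ)).prod) = (l.map a).prod := by
  rw [map_list_prod]
  simp [List.map_map, Function.comp_def]

lemma aux_lift_word {X : Type} {A : Type} [Ring A] [Algebra ℂ A] (a : X → A)
    (w : FreeMonoid X) :
    FreeAlgebra.lift ℂ a (FreeMonoid.lift (FreeAlgebra.ι ℂ) w)
      = (w.toList.map a).prod := by
  rw [FreeMonoid.lift_apply, aux_lift_list]

lemma aux_monalg_lift_sum {X : Type} (g : MonoidAlgebra ℂ (FreeMonoid X)) :
    (MonoidAlgebra.lift ℂ (FreeAlgebra ℂ X) (FreeMonoid X)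
        (FreeMonoid.lift (FreeAlgebra.ι ℂ))) g
      = g.coeff.sum fun w c => c • (FreeMonoid.lift (FreeAlgebra.ι ℂ) w) := by
  exact MonoidAlgebra.lift_apply _ _

lemma aux_lift_eval {X : Type} {A : Type} [Ring A] [Algebra ℂ A] (a : X → A)
    (P : FA X) :
    FreeAlgebra.lift ℂ a P
      = (coefficient P).sum fun w c => c • (w.toList.map a).prod := by
  conv_lhs => rw [show P = (FreeAlgebra.equivMonoidAlgebraFreeMonoid (R := ℂ)
    (X := X)).symm (MonoidAlgebra.ofCoeff (coefficient P)) from (AlgEquiv.symm_apply_apply _ P).symm]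
  rw [aux_symm_apply_eq, aux_monalg_lift_sum, Finsupp.sum, map_sum, Finsupp.sum]
  refine Finset.sum_congr rfl fun w _ => ?_
  rw [map_smul, aux_lift_word]

lemma aux_fa_star_smul {X : Type} (c : ℂ) (x : FA X) :
    star (c • x) = c • star x := by
  rw [Algebra.smul_def, star_mul, FreeAlgebra.star_algebraMap, Algebra.smul_def,
    Algebra.commutes]

lemma aux_star_word_prod {X : Type} (l : List X) :
    star ((l.map (FreeAlgebra.ι ℂ)).prod : FA X)
      = (l.reverse.map (FreeAlgebra.ι ℂ)).prod := by
  induction l with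
  | nil => simp
  | cons x t ih => simp [star_mul, ih, List.prod_append]

lemma aux_eval_reverse {X : Type} {k : ℕ} (a : X → Matrix (Fin k) (Fin k) ℂ)
    (ha : ∀ i, IsSelfAdjoint (a i)) (l : List X) :
    ((l.reverse.map a).prod) = star ((l.map a).prod) := by
  induction l with
  | nil => simp
  | cons x t ih =>
    rw [List.map_reverse] at ih
    simp only [List.reverse_cons, List.map_append, List.map_cons, List.map_nil,
      List.prod_append, List.prod_cons, List.prod_nil, mul_one, List.map_reverse,
      star_mul, ih, (ha x).star_eq]

lemma aux_lift_cstar {X : Type} {k : ℕ} (a : X → Matrix (Fin k) (Fin k) ℂ)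
    (ha : ∀ i, IsSelfAdjoint (a i)) (P : FA X) :
    FreeAlgebra.lift ℂ a (cstar P) = star (FreeAlgebra.lift ℂ a P) := by
  rw [cstar, aux_symm_apply_eq, aux_monalg_lift_sum, MonoidAlgebra.coeff_ofCoeff,
    Finsupp.sum_mapRange_index (by simp), Finsupp.sum, star_sum, map_sum,
    aux_lift_eval a P, Finsupp.sum, star_sum]
  refine Finset.sum_congr rfl fun w _ => ?_
  rw [aux_fa_star_smul, map_smul, star_smul, FreeMonoid.lift_apply,
    aux_star_word_prod, aux_lift_list, aux_eval_reverse a ha]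
  rfl

lemma aux_trace_ccyc {X : Type} {k : ℕ} (a : X → Matrix (Fin k) (Fin k) ℂ)
    {c : FA X} (hc : c ∈ Ccyc X) :
    Matrix.trace (FreeAlgebra.lift ℂ a c) = 0 := by
  induction hc using Submodule.span_induction with
  | mem x hx =>
    obtain ⟨p, q, rfl⟩ := hx
    rw [map_sub, map_mul, map_mul, Matrix.trace_sub, Matrix.trace_mul_comm,
      sub_self]
  | zero => simp
  | add x y _ _ hx hy => simp [map_add, hx, hy]
  | smul r x _ hx => simp [map_smul, hx]

lemma aux_trace_star_mul_self {k : ℕ} (B : Matrix (Fin k) (Fin k) ℂ) :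
    Matrix.trace (star B * B)
      = ∑ q, ∑ p, (Complex.normSq (B p q) : ℂ) := by
  simp [Matrix.trace, Matrix.diag, Matrix.mul_apply,
    Matrix.star_eq_conjTranspose, Matrix.conjTranspose_apply,
    Complex.normSq_eq_conj_mul_self, Complex.star_def]

/-- If a sum of hermitian squares `Σᵢ Pᵢ*Pᵢ` lies in
`J_k + C_cyc` (`k ≥ 1`), then every `Pᵢ` lies in `J_k`. -/
theorem sum_of_squares_in_Jset_add_Ccyc (n : ℕ) (k : ℕ) (hk : 1 ≤ k)
    (m : ℕ) (P : Fin m → FA (Fin n))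
    (h : ∃ j ∈ Jset (Fin n) k, ∃ c ∈ Ccyc (Fin n),
      (∑ i, cstar (P i) * P i) = j + c) :
    ∀ i, P i ∈ Jset (Fin n) k := by
  intro i0 a ha
  obtain ⟨j, hj, c, hc, heq⟩ := h
  set A : Fin m → Matrix (Fin k) (Fin k) ℂ :=
    fun i => FreeAlgebra.lift ℂ a (P i) with hA
  -- apply the evaluation and take traces
  have hev2 : (∑ i, Matrix.trace (star (A i) * A i)) = 0 := by
    have : ∑ i, Matrix.trace (star (A i) * A i)
        = Matrix.trace (FreeAlgebra.lift ℂ a (∑ i, cstar (P i) * P i)) := by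
      rw [map_sum, Matrix.trace_sum]
      refine Finset.sum_congr rfl fun i _ => ?_
      rw [map_mul, aux_lift_cstar a ha]
    rw [this, heq, map_add, Matrix.trace_add, hj a ha, Matrix.trace_zero,
      aux_trace_ccyc a hc, add_zero]
  have hev3 : (∑ i, ∑ q, ∑ p, Complex.normSq (A i p q) : ℝ) = 0 := by
    have hcast : ((∑ i, ∑ q, ∑ p, Complex.normSq (A i p q) : ℝ) : ℂ) = 0 := by
      push_cast
      rw [← hev2]
      exact (Finset.sum_congr rfl fun i _ => (aux_trace_star_mul_self (A i)).symm)
    exact_mod_cast hcast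
  -- every entry of every `A i` vanishes
  have hzero : ∀ i p q, Complex.normSq (A i p q) = 0 := by
    intro i p q
    have h1 := (Finset.sum_eq_zero_iff_of_nonneg fun i _ =>
      Finset.sum_nonneg fun q _ => Finset.sum_nonneg fun p _ =>
        Complex.normSq_nonneg _).mp hev3 i (Finset.mem_univ i)
    have h2 := (Finset.sum_eq_zero_iff_of_nonneg fun q _ =>
      Finset.sum_nonneg fun p _ => Complex.normSq_nonneg _).mp h1 q
        (Finset.mem_univ q)
    exact (Finset.sum_eq_zero_iff_of_nonneg fun p _ =>
      Complex.normSq_nonneg _).mp h2 p (Finset.mem_univ p)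
  show A i0 = 0
  ext p q
  exact Complex.normSq_eq_zero.mp (hzero i0 p q)
end
end

section
/- Let k ≥ 1 and P ∈ J_k. Then every nonzero homogeneous part of P has degree at least 2k; in particular every nonzero element of J_k has degree at least 2k. -/
noncomputable section

/-- Polynomials of degree at most `m`. -/
def degLE (X : Type) (m : ℕ) : Set (FA X) :=
  {P | ∀ w ∈ (coefficient P).support, (FreeMonoid.length w) ≤ m}

-- L1: decomposition of evaluation
lemma lift_eq_sum {n : ℕ} {A : Type} [Semiring A] [Algebra ℂ A] (b : Fin n → A) (Q : FA (Fin n)) :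
    FreeAlgebra.lift ℂ b Q = (coefficient Q).sum fun w c => c • FreeMonoid.lift b w := by
  have h : (MonoidAlgebra.lift ℂ A (FreeMonoid (Fin n)) (FreeMonoid.lift b)).comp
      (FreeAlgebra.equivMonoidAlgebraFreeMonoid (R := ℂ) (X := Fin n)).toAlgHom
      = FreeAlgebra.lift ℂ b := by
    apply FreeAlgebra.hom_ext
    funext x
    simp [FreeAlgebra.equivMonoidAlgebraFreeMonoid, MonoidAlgebra.lift_single]
  have h2 := DFunLike.congr_fun h Q
  simpa [coefficient, MonoidAlgebra.lift_apply] using h2.symm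

-- L2: naturality
lemma lift_natural {n : ℕ} {A B : Type} [Semiring A] [Algebra ℂ A] [Semiring B] [Algebra ℂ B]
    (f : A →ₐ[ℂ] B) (b : Fin n → A) (Q : FA (Fin n)) :
    f (FreeAlgebra.lift ℂ b Q) = FreeAlgebra.lift ℂ (fun i => f (b i)) Q := by
  have h : f.comp (FreeAlgebra.lift ℂ b) = FreeAlgebra.lift ℂ (fun i => f (b i)) := by
    apply FreeAlgebra.hom_ext; funext x; simp
  exact DFunLike.congr_fun h Q


-- L3: vanishing on all matrices
lemma lift_eq_zero_of_mem_Jset {n k : ℕ} {P : FA (Fin n)} (hP : P ∈ Jset (Fin n) k)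
    (b : Fin n → Matrix (Fin k) (Fin k) ℂ) : FreeAlgebra.lift ℂ b P = 0 := by
  classical
  set x : Fin n → Matrix (Fin k) (Fin k) ℂ := fun i => (1/2 : ℂ) • (b i + star (b i)) with hx
  set y : Fin n → Matrix (Fin k) (Fin k) ℂ :=
    fun i => (-(Complex.I)/2) • (b i - star (b i)) with hy
  have hxsa : ∀ i, IsSelfAdjoint (x i) := by
    intro i
    rw [IsSelfAdjoint, hx]
    simp only [star_smul, star_add, star_star]
    rw [show star ((1:ℂ)/2) = (1:ℂ)/2 by simp, add_comm]
  have hysa : ∀ i, IsSelfAdjoint (y i) := by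
    intro i
    rw [IsSelfAdjoint, hy]
    simp only [star_smul, star_sub, star_star]
    rw [show star (-(Complex.I)/2 : ℂ) = Complex.I/2 by simp [Complex.ext_iff]]
    ring_nf
    module
  have hb : ∀ i, b i = x i + Complex.I • y i := by
    intro i
    rw [hx, hy]
    rw [smul_smul]
    rw [show (Complex.I * (-(Complex.I)/2)) = (1/2 : ℂ) by ring_nf; rw [Complex.I_sq]; ring]
    show b i = (1/2 : ℂ) • (b i + star (b i)) + (1/2 : ℂ) • (b i - star (b i))
    rw [smul_add, smul_sub]
    module
  set B : Fin n → Matrix (Fin k) (Fin k) (Polynomial ℂ) :=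
    fun i => (x i).map Polynomial.C + (y i).map (fun c => Polynomial.C c * Polynomial.X) with hB
  set M : Matrix (Fin k) (Fin k) (Polynomial ℂ) := FreeAlgebra.lift ℂ B P with hM
  have key : ∀ t : ℂ, (Polynomial.aeval t : Polynomial ℂ →ₐ[ℂ] ℂ).mapMatrix M
      = FreeAlgebra.lift ℂ (fun i => x i + t • y i) P := by
    intro t
    rw [hM, lift_natural]
    have harg : ∀ i, (Polynomial.aeval t : Polynomial ℂ →ₐ[ℂ] ℂ).mapMatrix (B i)
        = x i + t • y i := by
      intro i
      ext p q
      simp only [AlgHom.mapMatrix_apply, hB, Matrix.map_apply, Matrix.map_add,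
        Matrix.add_apply, Matrix.smul_apply, map_add, Polynomial.aeval_C,
        map_mul, Polynomial.aeval_X, smul_eq_mul, Algebra.algebraMap_self, RingHom.id_apply]
      show x i p q + y i p q * t = x i p q + t * y i p q
      ring
    simp only [harg]
  have hMzero : M = 0 := by
    refine Matrix.ext fun p q => ?_
    rw [Matrix.zero_apply]
    apply Polynomial.eq_zero_of_infinite_isRoot
    apply Set.infinite_of_injective_forall_mem
      (f := fun t : ℝ => (t : ℂ))
    · intro a c h
      simp only at h
      exact_mod_cast h
    · intro t
      have h0 : FreeAlgebra.lift ℂ (fun i => x i + (t:ℂ) • y i) P = 0 := by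
        apply hP
        intro i
        apply (hxsa i).add
        have : IsSelfAdjoint ((t:ℂ)) := by
          rw [IsSelfAdjoint]
          simp [Complex.ext_iff]
        exact this.smul (hysa i)
      have := key (t : ℂ)
      rw [h0] at this
      have h2 := congrFun (congrFun this p) q
      simpa [Polynomial.IsRoot, Matrix.zero_apply] using h2
  have hI := key Complex.I
  rw [hMzero] at hI
  have hfin : FreeAlgebra.lift ℂ (fun i => x i + Complex.I • y i) P = 0 := by
    rw [← hI, map_zero]
  rw [funext hb]
  exact hfin

variable {n k d : ℕ}

def rowF (hd : d < 2*k) (s : Fin d) : Fin k := ⟨s.1 / 2, by have := s.2; omega⟩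
def colF (hd : d < 2*k) (s : Fin d) : Fin k := ⟨(s.1 + 1) / 2, by have := s.2; omega⟩

def bmat (hd : d < 2*k) (wf : Fin d → Fin n) (i : Fin n) :
    Matrix (Fin k) (Fin k) (MvPolynomial (Fin d) ℂ) :=
  fun p q => ∑ s : Fin d,
    if wf s = i ∧ rowF hd s = p ∧ colF hd s = q then MvPolynomial.X s else 0

def mT (T : Finset (Fin d)) : Fin d →₀ ℕ := ∑ s ∈ T, Finsupp.single s 1

lemma mT_apply (T : Finset (Fin d)) (s : Fin d) : mT T s = if s ∈ T then 1 else 0 := by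
  classical
  rw [mT, Finset.sum_apply']
  simp [Finsupp.single_apply]

lemma mT_support (T : Finset (Fin d)) : (mT T).support = T := by
  ext s; simp [Finsupp.mem_support_iff, mT_apply]

lemma mT_eq_zero_iff (T : Finset (Fin d)) : mT T = 0 ↔ T = ∅ := by
  constructor
  · intro h
    ext s
    have : mT T s = (0 : Fin d →₀ ℕ) s := by rw [h]
    rw [mT_apply] at this
    simp only [Finsupp.coe_zero, Pi.zero_apply] at this
    simp only [Finset.notMem_empty, iff_false]
    intro hs
    rw [if_pos hs] at this
    exact one_ne_zero this
  · intro h; simp [h, mT]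

lemma mT_sub_single (T : Finset (Fin d)) (s : Fin d) (hs : s ∈ T) :
    mT T - Finsupp.single s 1 = mT (T.erase s) := by
  ext a
  rw [Finsupp.tsub_apply]
  rw [mT_apply, mT_apply, Finsupp.single_apply]
  by_cases h : a = s
  · subst h; simp [hs]
  · simp [h, Finset.mem_erase, Ne.symm, fun hh => h hh]

def goodVal (hd : d < 2*k) (wf : Fin d → Fin n) :
    List (Fin n) → Finset (Fin d) → Fin k → Fin k → ℂ
  | [], T, p, q => if T = ∅ ∧ p = q then 1 else 0
  | i :: v, T, p, q =>
    if hT : T.Nonempty then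
      if wf (T.min' hT) = i ∧ rowF hd (T.min' hT) = p then
        goodVal hd wf v (T.erase (T.min' hT)) (colF hd (T.min' hT)) q
      else 0
    else 0

-- pruning: non-minimal choices contribute 0
lemma goodVal_prune (hd : d < 2*k) (wf : Fin d → Fin n) (v : List (Fin n))
    (T : Finset (Fin d)) (s : Fin d) (hs : s ∈ T) (hT : T.Nonempty)
    (hne : s ≠ T.min' hT) (q : Fin k) :
    goodVal hd wf v (T.erase s) (colF hd s) q = 0 := by
  have hmem : T.min' hT ∈ T.erase s := Finset.mem_erase.mpr ⟨Ne.symm hne, T.min'_mem hT⟩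
  have hNE : (T.erase s).Nonempty := ⟨_, hmem⟩
  have hlt : ((T.erase s).min' hNE : ℕ) < s := by
    have h1 : (T.erase s).min' hNE ≤ T.min' hT := Finset.min'_le _ _ hmem
    have h2 : T.min' hT ≤ s := Finset.min'_le _ _ hs
    have h3 : (T.min' hT : ℕ) ≠ (s : ℕ) := fun hc => hne (Fin.ext hc.symm)
    have h1' : ((T.erase s).min' hNE : ℕ) ≤ (T.min' hT : ℕ) := h1
    have h2' : ((T.min' hT) : ℕ) ≤ (s : ℕ) := h2
    omega
  cases v with
  | nil =>
    rw [goodVal]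
    rw [if_neg]
    rintro ⟨h1, -⟩
    rw [h1] at hmem
    exact absurd hmem (Finset.notMem_empty _)
  | cons j v' =>
    rw [goodVal]
    rw [dif_pos hNE, if_neg]
    rintro ⟨-, h2⟩
    have : (((T.erase s).min' hNE : ℕ)) / 2 = ((s : ℕ) + 1) / 2 := congrArg Fin.val h2
    omega

lemma coeff_prod (hd : d < 2*k) (wf : Fin d → Fin n) (v : List (Fin n)) :
    ∀ (T : Finset (Fin d)) (p q : Fin k),
    MvPolynomial.coeff (mT T) (((v.map (bmat hd wf)).prod) p q) = goodVal hd wf v T p q := by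
  induction v with
  | nil =>
    intro T p q
    rw [List.map_nil, List.prod_nil, goodVal]
    rw [Matrix.one_apply]
    by_cases hpq : p = q
    · simp only [hpq, if_true, and_true]
      rw [MvPolynomial.coeff_one]
      by_cases hT : T = ∅
      · simp [hT, mT]
      · rw [if_neg, if_neg hT]
        intro h0
        exact hT ((mT_eq_zero_iff T).mp h0.symm)
    · simp only [hpq, if_false, and_false, MvPolynomial.coeff_zero]
  | cons i v ih =>
    intro T p q
    rw [List.map_cons, List.prod_cons, Matrix.mul_apply, MvPolynomial.coeff_sum]
    have hterm : ∀ m : Fin k,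
        MvPolynomial.coeff (mT T) ((bmat hd wf i p m) * ((v.map (bmat hd wf)).prod m q))
        = ∑ s : Fin d, if wf s = i ∧ rowF hd s = p ∧ colF hd s = m then
            (if s ∈ T then goodVal hd wf v (T.erase s) m q else 0) else 0 := by
      intro m
      rw [bmat, Finset.sum_mul, MvPolynomial.coeff_sum]
      refine Finset.sum_congr rfl fun s _ => ?_
      rw [ite_mul, zero_mul, apply_ite (MvPolynomial.coeff (mT T)), MvPolynomial.coeff_zero,
        mul_comm, MvPolynomial.coeff_mul_X', mT_support]
      by_cases hsT : s ∈ T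
      · rw [if_pos hsT, mT_sub_single T s hsT, ih]
        simp [hsT]
      · rw [if_neg hsT]
        simp [hsT]
    simp only [hterm]
    rw [Finset.sum_comm]
    have hcollapse : ∀ s : Fin d,
        (∑ m : Fin k, if wf s = i ∧ rowF hd s = p ∧ colF hd s = m then
            (if s ∈ T then goodVal hd wf v (T.erase s) m q else 0) else 0)
        = if wf s = i ∧ rowF hd s = p then
            (if s ∈ T then goodVal hd wf v (T.erase s) (colF hd s) q else 0) else 0 := by
      intro s
      by_cases hAB : wf s = i ∧ rowF hd s = p
      · rw [if_pos hAB]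
        obtain ⟨h1, h2⟩ := hAB
        have heq : ∀ m : Fin k, (if wf s = i ∧ rowF hd s = p ∧ colF hd s = m then
            (if s ∈ T then goodVal hd wf v (T.erase s) m q else 0) else 0)
            = if colF hd s = m then
              (if s ∈ T then goodVal hd wf v (T.erase s) m q else 0) else 0 := by
          intro m
          by_cases hc : colF hd s = m
          · simp [h1, h2, hc]
          · simp [hc]
        simp only [heq]
        rw [Finset.sum_ite_eq Finset.univ (colF hd s)
          (fun m => if s ∈ T then goodVal hd wf v (T.erase s) m q else 0)]
        rw [if_pos (Finset.mem_univ _)]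
      · rw [if_neg hAB]
        refine Finset.sum_eq_zero fun m _ => ?_
        rw [if_neg]
        rintro ⟨h1, h2, -⟩
        exact hAB ⟨h1, h2⟩
    simp only [hcollapse]
    by_cases hT : T.Nonempty
    · rw [goodVal, dif_pos hT]
      rw [Finset.sum_eq_single (T.min' hT)]
      · rw [if_pos (T.min'_mem hT)]
      · intro s _ hne
        by_cases hsT : s ∈ T
        · rw [goodVal_prune hd wf v T s hsT hT hne q]
          simp
        · simp [hsT]
      · intro h; exact absurd (Finset.mem_univ _) h
    · rw [goodVal, dif_neg hT]
      refine Finset.sum_eq_zero fun s _ => ?_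
      have hsT : s ∉ T := fun h => hT ⟨s, h⟩
      simp [hsT]

lemma Tset_min (j : ℕ) (hj : j < d) :
    (Finset.univ.filter fun s : Fin d => j ≤ (s:ℕ)).min'
      ⟨⟨j, hj⟩, by simp⟩ = ⟨j, hj⟩ := by
  apply le_antisymm
  · exact Finset.min'_le _ _ (by simp)
  · apply Finset.le_min'
    intro y hy
    simp only [Finset.mem_filter, Finset.mem_univ, true_and] at hy
    exact hy

lemma Tset_erase (j : ℕ) (hj : j < d) :
    (Finset.univ.filter fun s : Fin d => j ≤ (s:ℕ)).erase ⟨j, hj⟩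
      = Finset.univ.filter fun s : Fin d => j + 1 ≤ (s:ℕ) := by
  ext s
  simp only [Finset.mem_erase, Finset.mem_filter, Finset.mem_univ, true_and]
  constructor
  · rintro ⟨hne, hle⟩
    rcases Nat.lt_or_ge j s with h | h
    · omega
    · exfalso
      exact hne (Fin.ext (by simp only [Fin.val_mk]; omega))
  · intro h
    refine ⟨fun hc => ?_, by omega⟩
    rw [hc] at h
    simp only [Fin.val_mk] at h
    omega

lemma goodVal_tail (hk : 1 ≤ k) (hd : d < 2*k) (wf : Fin d → Fin n) (v : List (Fin n)) :
    ∀ (j : ℕ) (hj : j ≤ d),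
    goodVal hd wf v (Finset.univ.filter fun s : Fin d => j ≤ (s:ℕ))
        ⟨j/2, by omega⟩ ⟨d/2, by omega⟩
      = if v = (List.ofFn wf).drop j then 1 else 0 := by
  induction v with
  | nil =>
    intro j hj
    rw [goodVal]
    by_cases hjd : j = d
    · subst hjd
      rw [if_pos, if_pos]
      · symm
        rw [List.drop_eq_nil_iff, List.length_ofFn]
      · constructor
        · ext s
          simp only [Finset.mem_filter, Finset.mem_univ, true_and, Finset.notMem_empty,
            iff_false]
          have := s.2; omega
        · rfl
    · have hjd' : j < d := by omega
      rw [if_neg, if_neg]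
      · intro hc
        have : (List.ofFn wf).length ≤ j := by
          rw [← List.drop_eq_nil_iff, ← hc]
        rw [List.length_ofFn] at this
        omega
      · rintro ⟨hc, -⟩
        have : (⟨j, hjd'⟩ : Fin d) ∈ Finset.univ.filter fun s : Fin d => j ≤ (s:ℕ) := by simp
        rw [hc] at this
        exact absurd this (Finset.notMem_empty _)
  | cons i v' ih =>
    intro j hj
    by_cases hjd : j = d
    · subst hjd
      rw [goodVal, dif_neg, if_neg]
      · intro hc
        have h2 : (List.ofFn wf).drop j = [] := by
          rw [List.drop_eq_nil_iff, List.length_ofFn]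
        rw [h2] at hc
        exact List.cons_ne_nil _ _ hc
      · intro hne
        obtain ⟨s, hs⟩ := hne
        simp only [Finset.mem_filter, Finset.mem_univ, true_and] at hs
        have := s.2; omega
    · have hjd' : j < d := by omega
      rw [goodVal]
      have hTne : (Finset.univ.filter fun s : Fin d => j ≤ (s:ℕ)).Nonempty :=
        ⟨⟨j, hjd'⟩, by simp⟩
      rw [dif_pos hTne]
      have hmin := Tset_min j hjd'
      rw [show (Finset.univ.filter fun s : Fin d => j ≤ (s:ℕ)).min' hTne = ⟨j, hjd'⟩ from hmin]
      have hdrop : (List.ofFn wf).drop j = wf ⟨j, hjd'⟩ :: (List.ofFn wf).drop (j+1) := by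
        rw [List.drop_eq_getElem_cons (by rw [List.length_ofFn]; omega)]
        congr 1
        simp
      by_cases hwi : wf ⟨j, hjd'⟩ = i
      · rw [if_pos ⟨hwi, rfl⟩, Tset_erase j hjd']
        have hcol : colF hd ⟨j, hjd'⟩ = (⟨(j+1)/2, by omega⟩ : Fin k) := rfl
        rw [hcol]
        rw [ih (j+1) (by omega)]
        rw [hdrop, ← hwi]
        by_cases hv : v' = (List.ofFn wf).drop (j+1)
        · rw [if_pos hv, if_pos (by rw [hv])]
        · rw [if_neg hv, if_neg (by intro hc; exact hv (List.tail_eq_of_cons_eq hc))]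
      · rw [if_neg (by rintro ⟨h1, -⟩; exact hwi h1)]
        rw [hdrop, if_neg]
        intro hc
        exact hwi (List.head_eq_of_cons_eq hc).symm

lemma support_length {n k : ℕ} (hk : 1 ≤ k) {P : FA (Fin n)} (hP : P ∈ Jset (Fin n) k)
    (w : FreeMonoid (Fin n)) (hw : w ∈ (coefficient P).support) :
    2 * k ≤ FreeMonoid.length w := by
  by_contra hlen
  push_neg at hlen
  set l : List (Fin n) := FreeMonoid.toList w with hl
  have hd : l.length < 2 * k := hlen
  set b := bmat (n := n) hd l.get with hb
  -- Step 1 : the evaluation of P at b vanishes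
  have hzero : FreeAlgebra.lift ℂ b P = 0 := by
    refine Matrix.ext fun p q => ?_
    rw [Matrix.zero_apply]
    apply MvPolynomial.funext (q := 0)
    intro c
    rw [map_zero]
    have hnat := lift_natural ((MvPolynomial.aeval c).mapMatrix :
      Matrix (Fin k) (Fin k) (MvPolynomial (Fin l.length) ℂ) →ₐ[ℂ] Matrix (Fin k) (Fin k) ℂ) b P
    rw [lift_eq_zero_of_mem_Jset hP] at hnat
    have hentry := congrFun (congrFun hnat p) q
    simp only [AlgHom.mapMatrix_apply, Matrix.map_apply, Matrix.zero_apply] at hentry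
    rw [← MvPolynomial.coe_aeval_eq_eval]
    exact hentry
  -- Step 2 : extract the coefficient of the multilinear staircase monomial
  have hp0 : (0 : ℕ) / 2 < k := by omega
  have hq0 : l.length / 2 < k := by omega
  have hext := congrArg (fun M : Matrix (Fin k) (Fin k) (MvPolynomial (Fin l.length) ℂ) =>
    MvPolynomial.coeff (mT Finset.univ) (M ⟨0/2, hp0⟩ ⟨l.length/2, hq0⟩)) hzero
  simp only [Matrix.zero_apply, MvPolynomial.coeff_zero] at hext
  rw [lift_eq_sum] at hext
  rw [Finsupp.sum] at hext
  rw [Matrix.sum_apply, MvPolynomial.coeff_sum] at hext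
  have huniv : (Finset.univ : Finset (Fin l.length))
      = Finset.univ.filter (fun s : Fin l.length => 0 ≤ (s : ℕ)) := by
    simp
  have hterm : ∀ u ∈ (coefficient P).support,
      MvPolynomial.coeff (mT Finset.univ)
        ((coefficient P u • FreeMonoid.lift b u) ⟨0/2, hp0⟩ ⟨l.length/2, hq0⟩)
      = coefficient P u * (if FreeMonoid.toList u = l then 1 else 0) := by
    intro u _
    rw [Matrix.smul_apply, MvPolynomial.coeff_smul, smul_eq_mul]
    congr 1
    rw [FreeMonoid.lift_apply, hb, huniv, coeff_prod hd l.get (FreeMonoid.toList u)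
      (Finset.univ.filter (fun s : Fin l.length => 0 ≤ (s : ℕ))) ⟨0/2, hp0⟩ ⟨l.length/2, hq0⟩]
    rw [goodVal_tail hk hd l.get (FreeMonoid.toList u) 0 (by omega)]
    rw [List.drop_zero, List.ofFn_get]
  rw [Finset.sum_congr rfl hterm] at hext
  rw [Finset.sum_eq_single w] at hext
  · rw [if_pos rfl, mul_one] at hext
    exact (Finsupp.mem_support_iff.mp hw) hext
  · intro u _ hne
    rw [if_neg, mul_zero]
    intro hc
    exact hne (FreeMonoid.toList.injective (by rw [hc, hl]))
  · intro hcon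
    exact absurd hw hcon

/-- If `P ∈ J_k` (`k ≥ 1`), then every nonzero homogeneous part
of `P` has degree at least `2k`; in particular every nonzero element of `J_k` has
degree at least `2k`. -/
theorem Jset_min_degree (n : ℕ) (k : ℕ) (hk : 1 ≤ k)
    (P : FA (Fin n)) (hP : P ∈ Jset (Fin n) k) :
    (∀ d : ℕ, homPart d P ≠ 0 → 2 * k ≤ d) ∧
    (P ≠ 0 → ∀ m : ℕ, P ∈ degLE (Fin n) m → 2 * k ≤ m) := by
  constructor
  · intro d hne
    have hfil : (coefficient P).filter
        (fun w : FreeMonoid (Fin n) => FreeMonoid.length w = d) ≠ 0 := by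
      intro h
      apply hne
      rw [homPart, h, MonoidAlgebra.ofCoeff_zero, map_zero]
    obtain ⟨w, hw⟩ := Finsupp.support_nonempty_iff.mpr hfil
    rw [Finsupp.support_filter, Finset.mem_filter] at hw
    obtain ⟨hw1, hw2⟩ := hw
    calc 2*k ≤ FreeMonoid.length w := support_length hk hP w hw1
    _ = d := hw2
  · intro hP0 m hdeg
    have hc : coefficient P ≠ 0 := by
      intro h
      apply hP0
      have h2 : FreeAlgebra.equivMonoidAlgebraFreeMonoid (R := ℂ) (X := Fin n) P = 0 := MonoidAlgebra.coeff_injective h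
      exact (map_eq_zero_iff _ (AlgEquiv.injective _)).mp h2
    obtain ⟨w, hw⟩ := Finsupp.support_nonempty_iff.mpr hc
    exact le_trans (support_length hk hP w hw) (hdeg w hw)
end
end

section
/- Let P ∈ ℂ⟨X₁,…,Xₙ⟩ be a sum of hermitian squares of degree at most m, i.e. P ∈ ℂ⟨X⟩_{≤m} ∩ Q(ℂ⟨X⟩). Then there exist polynomials P₁,…,P_{(n+1)^m} ∈ ℂ⟨X⟩, each of degree at most m/2, such that P = Σ_{i=1}^{(n+1)^m} Pᵢ*Pᵢ. -/
noncomputable section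

/-- The convex cone `Q(ℂ⟨X⟩)` of sums of hermitian squares. -/
def Qcone (X : Type) : Set (FA X) :=
  {x | ∃ (m : ℕ) (P : Fin m → FA X), x = ∑ i, cstar (P i) * P i}

variable {X : Type}

def piW (w : FreeMonoid X) : FA X := FreeMonoid.lift (FreeAlgebra.ι ℂ) w

theorem piW_mul (w v : FreeMonoid X) : piW (w * v) = piW w * piW v := by simp [piW]
theorem piW_of (x : X) : piW (FreeMonoid.of x) = FreeAlgebra.ι ℂ x := by simp [piW]

theorem T_iota (x : X) : (FreeAlgebra.equivMonoidAlgebraFreeMonoid (R := ℂ) (X := X))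
    (FreeAlgebra.ι ℂ x) = MonoidAlgebra.single (FreeMonoid.of x) 1 := by
  simp [FreeAlgebra.equivMonoidAlgebraFreeMonoid]

theorem T_piW (w : FreeMonoid X) :
    (FreeAlgebra.equivMonoidAlgebraFreeMonoid (R := ℂ) (X := X)) (piW w)
      = MonoidAlgebra.single w 1 := by
  induction w using FreeMonoid.recOn with
  | one => simp [piW]; rfl
  | of_mul x y ih =>
    rw [piW_mul, map_mul, ih, piW_of, T_iota, MonoidAlgebra.single_mul_single, one_mul]

theorem star_piW (w : FreeMonoid X) : star (piW w) = piW (star w) := by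
  induction w using FreeMonoid.recOn with
  | one => simp [piW]
  | of_mul x y ih => rw [piW_mul, star_mul, piW_of, FreeAlgebra.star_ι, star_mul, ih,
      FreeMonoid.star_of, piW_mul, piW_of]

theorem star_smul' (c : ℂ) (x : FA X) : star (c • x) = c • star x := by
  rw [Algebra.smul_def, star_mul, FreeAlgebra.star_algebraMap, Algebra.smul_def,
    ← Algebra.commutes]

theorem Tsymm_single (w : FreeMonoid X) (c : ℂ) :
    (FreeAlgebra.equivMonoidAlgebraFreeMonoid (R := ℂ) (X := X)).symm
      (MonoidAlgebra.single w c) = c • piW w := by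
  apply (FreeAlgebra.equivMonoidAlgebraFreeMonoid (R := ℂ) (X := X)).injective
  rw [AlgEquiv.apply_symm_apply, map_smul, T_piW]
  ext v
  simp [MonoidAlgebra.single_apply, Finsupp.single_apply, mul_comm]


theorem star_Tsymm (g : MonoidAlgebra ℂ (FreeMonoid X)) :
    star ((FreeAlgebra.equivMonoidAlgebraFreeMonoid (R := ℂ) (X := X)).symm g)
      = (FreeAlgebra.equivMonoidAlgebraFreeMonoid (R := ℂ) (X := X)).symm
        (MonoidAlgebra.mapDomain star g) := by
  induction g using MonoidAlgebra.induction with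
  | zero => simp
  | single_add w c f hw hc ih =>
      rw [MonoidAlgebra.mapDomain_add, map_add, map_add, star_add, ih, MonoidAlgebra.mapDomain_single]
      congr 1
      rw [Tsymm_single, Tsymm_single, star_smul', star_piW]

theorem coefficient_cstar (P : FA X) (v : FreeMonoid X) :
    coefficient (cstar P) v = (starRingEnd ℂ) (coefficient P (star v)) := by
  rw [cstar, star_Tsymm]
  show ((FreeAlgebra.equivMonoidAlgebraFreeMonoid (R := ℂ) (X := X))
    ((FreeAlgebra.equivMonoidAlgebraFreeMonoid (R := ℂ) (X := X)).symm _)).coeff v = _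
  rw [AlgEquiv.apply_symm_apply]
  show Finsupp.mapDomain star (Finsupp.mapRange (starRingEnd ℂ) (map_zero _) (coefficient P)) v = _
  conv_lhs => rw [show v = star (star v) from (star_star v).symm]
  rw [Finsupp.mapDomain_apply (star_injective) _ (star v), Finsupp.mapRange_apply]

theorem coeff_inj : Function.Injective (coefficient (X := X)) := fun P Q h => by
  apply (FreeAlgebra.equivMonoidAlgebraFreeMonoid (R := ℂ) (X := X)).injective
  exact MonoidAlgebra.coeff_injective h

theorem coefficient_add (P Q : FA X) :
    coefficient (P + Q) = coefficient P + coefficient Q :=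
  congrArg MonoidAlgebra.coeff (map_add (FreeAlgebra.equivMonoidAlgebraFreeMonoid (R := ℂ) (X := X)) P Q)

theorem coefficient_smul (c : ℂ) (P : FA X) :
    coefficient (c • P) = c • coefficient P :=
  congrArg MonoidAlgebra.coeff (map_smul (FreeAlgebra.equivMonoidAlgebraFreeMonoid (R := ℂ) (X := X)).toLinearEquiv c P)

theorem coefficient_zero : coefficient (0 : FA X) = 0 :=
  congrArg MonoidAlgebra.coeff (map_zero (FreeAlgebra.equivMonoidAlgebraFreeMonoid (R := ℂ) (X := X)))

theorem coefficient_sum {ι : Type*} (s : Finset ι) (F : ι → FA X) :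
    coefficient (∑ i ∈ s, F i) = ∑ i ∈ s, coefficient (F i) :=
  (congrArg MonoidAlgebra.coeff (map_sum (FreeAlgebra.equivMonoidAlgebraFreeMonoid (R := ℂ) (X := X)) F s)).trans
    (MonoidAlgebra.coeff_sum _ _)

theorem cstar_add (P Q : FA X) : cstar (P + Q) = cstar P + cstar Q := by
  apply coeff_inj; ext v
  simp [coefficient_cstar, coefficient_add]

theorem cstar_smul (c : ℂ) (P : FA X) : cstar (c • P) = (starRingEnd ℂ c) • cstar P := by
  apply coeff_inj; ext v
  simp [coefficient_cstar, coefficient_smul]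

theorem cstar_sum {ι : Type*} (s : Finset ι) (F : ι → FA X) :
    cstar (∑ i ∈ s, F i) = ∑ i ∈ s, cstar (F i) := by
  apply coeff_inj; ext v
  simp [coefficient_cstar, coefficient_sum, Finsupp.finset_sum_apply, map_sum]

theorem length_star (w : FreeMonoid X) : (star w).length = w.length :=
  List.length_reverse (as := w)


theorem coeff_eq_zero_of_degLE {P : FA X} {m : ℕ} (h : P ∈ degLE X m) {w : FreeMonoid X}
    (hw : m < w.length) : coefficient P w = 0 := by
  by_contra hc
  exact absurd (h w (Finsupp.mem_support_iff.mpr hc)) (by omega)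


open scoped Classical in
theorem coeff_mul_apply (P Q : FA X) (u : FreeMonoid X) :
    coefficient (P * Q) u = ∑ a ∈ (coefficient P).support, ∑ b ∈ (coefficient Q).support,
      if a * b = u then coefficient P a * coefficient Q b else 0 := by
  show ((FreeAlgebra.equivMonoidAlgebraFreeMonoid (R := ℂ) (X := X)) (P * Q)).coeff u = _
  rw [map_mul, MonoidAlgebra.coeff_mul]
  rw [Finsupp.sum]
  apply Finset.sum_congr rfl
  intro a _
  rw [Finsupp.sum]
  apply Finset.sum_congr rfl
  intro b _
  congr 1

theorem cstar_degLE {Q : FA X} {D : ℕ} (hQ : Q ∈ degLE X D) : cstar Q ∈ degLE X D := by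
  intro w hw
  rw [Finsupp.mem_support_iff, coefficient_cstar] at hw
  have : coefficient Q (star w) ≠ 0 := by simpa using hw
  have := hQ _ (Finsupp.mem_support_iff.mpr this)
  rwa [length_star] at this

theorem eq_of_mul_eq_len {a b v : FreeMonoid X} (he : a * b = star v * v)
    (hl : a.length = v.length) : a = star v ∧ b = v := by
  have htl : a.toList ++ b.toList = (star v).toList ++ v.toList := by
    rw [← FreeMonoid.toList_mul, ← FreeMonoid.toList_mul, he]
  have hlen : a.toList.length = (star v).toList.length := by
    show a.length = (star v).length
    rw [length_star, hl]
  obtain ⟨h1, h2⟩ := List.append_inj htl hlen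
  exact ⟨FreeMonoid.toList.injective h1, FreeMonoid.toList.injective h2⟩

open scoped Classical in
theorem coeff_sq_top {D : ℕ} {Q : FA X} (hQ : Q ∈ degLE X D) {v : FreeMonoid X}
    (hv : v.length = D) :
    coefficient (cstar Q * Q) (star v * v)
      = (starRingEnd ℂ) (coefficient Q v) * coefficient Q v := by
  have hcs := cstar_degLE hQ
  rw [coeff_mul_apply]
  have hstep : ∑ a ∈ (coefficient (cstar Q)).support, ∑ b ∈ (coefficient Q).support,
      (if a * b = star v * v then coefficient (cstar Q) a * coefficient Q b else 0)
      = ∑ b ∈ (coefficient Q).support,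
      (if star v * b = star v * v then coefficient (cstar Q) (star v) * coefficient Q b else 0) := by
    apply Finset.sum_eq_single (star v)
    · intro a ha hane
      apply Finset.sum_eq_zero
      intro b hb
      rw [if_neg]
      intro he
      have hla : a.length ≤ D := hcs a ha
      have hlb : b.length ≤ D := hQ b hb
      have hsum : a.length + b.length = 2 * D := by
        have := congrArg FreeMonoid.length he
        rw [FreeMonoid.length_mul, FreeMonoid.length_mul, length_star, hv] at this
        omega
      exact hane (eq_of_mul_eq_len he (by omega)).1
    · intro h
      apply Finset.sum_eq_zero
      intro b hb
      rw [Finsupp.notMem_support_iff.mp h, zero_mul, ite_self]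
  rw [hstep]
  have hstep2 : ∑ b ∈ (coefficient Q).support,
      (if star v * b = star v * v then coefficient (cstar Q) (star v) * coefficient Q b else 0)
      = (if star v * v = star v * v then coefficient (cstar Q) (star v) * coefficient Q v else 0) := by
    apply Finset.sum_eq_single v
    · intro b hb hbv
      rw [if_neg]
      intro he
      exact hbv (mul_left_cancel he)
    · intro h
      rw [if_pos rfl, Finsupp.notMem_support_iff.mp h, mul_zero]
  rw [hstep2, if_pos rfl, coefficient_cstar, star_star]

theorem degLE_mono {a b : ℕ} (h : a ≤ b) : degLE X a ⊆ degLE X b :=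
  fun _ hP w hw => le_trans (hP w hw) h

theorem deg_step {k m D : ℕ} {Q : Fin k → FA X}
    (hP : (∑ i, cstar (Q i) * Q i) ∈ degLE X m) (hm : m < 2 * D)
    (hQ : ∀ i, Q i ∈ degLE X D) : ∀ i, Q i ∈ degLE X (D - 1) := by
  have key : ∀ (v : FreeMonoid X), v.length = D → ∀ i, coefficient (Q i) v = 0 := by
    intro v hv
    have h0 : coefficient (∑ i, cstar (Q i) * Q i) (star v * v) = 0 :=
      coeff_eq_zero_of_degLE hP (by rw [FreeMonoid.length_mul, length_star, hv]; omega)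
    rw [coefficient_sum, Finsupp.finset_sum_apply] at h0
    have heach : ∀ i ∈ Finset.univ, coefficient (cstar (Q i) * Q i) (star v * v)
        = (Complex.normSq (coefficient (Q i) v) : ℂ) := by
      intro i _
      rw [coeff_sq_top (hQ i) hv, Complex.normSq_eq_conj_mul_self]
    rw [Finset.sum_congr rfl heach] at h0
    have h1 : ∑ i : Fin k, Complex.normSq (coefficient (Q i) v) = 0 := by
      exact_mod_cast h0
    intro i
    have h2 := (Finset.sum_eq_zero_iff_of_nonneg
      (fun j _ => Complex.normSq_nonneg _)).mp h1 i (Finset.mem_univ i)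
    exact Complex.normSq_eq_zero.mp h2
  intro i w hw
  have hle : w.length ≤ D := hQ i w hw
  rcases Nat.lt_or_ge w.length D with h | h
  · omega
  · exact absurd (key w (le_antisymm hle h) i) (Finsupp.mem_support_iff.mp hw)

theorem deg_all {k m : ℕ} {Q : Fin k → FA X}
    (hP : (∑ i, cstar (Q i) * Q i) ∈ degLE X m) :
    ∀ t, (∀ i, Q i ∈ degLE X (m / 2 + t)) → ∀ i, Q i ∈ degLE X (m / 2) := by
  intro t
  induction t with
  | zero => simpa
  | succ t ih =>
    intro h
    apply ih
    intro j
    have hm : m < 2 * (m / 2 + (t + 1)) := by omega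
    have := deg_step hP hm h j
    simpa using this

theorem degLE_self (Q : FA X) : Q ∈ degLE X ((coefficient Q).support.sup FreeMonoid.length) :=
  fun _ hw => Finset.le_sup hw

theorem part1 {k m : ℕ} (Q : Fin k → FA X)
    (hP : (∑ i, cstar (Q i) * Q i) ∈ degLE X m) : ∀ i, Q i ∈ degLE X (m / 2) := by
  apply deg_all hP (Finset.univ.sup (fun i => (coefficient (Q i)).support.sup FreeMonoid.length))
  intro i
  apply degLE_mono (le_trans (Finset.le_sup (Finset.mem_univ i)) (Nat.le_add_left _ _))
  exact degLE_self (Q i)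

section Enc
variable (n m : ℕ)

def enc (w : FreeMonoid (Fin n)) : Fin m → Fin (n + 1) :=
  fun j => if h : (j : ℕ) < w.length then (w.toList.get ⟨j, h⟩).castSucc else Fin.last n

theorem enc_len_eq {w w' : FreeMonoid (Fin n)} (hw : w.length ≤ m) (hlt : w.length < w'.length)
    (hw' : w'.length ≤ m) (h : enc n m w = enc n m w') : False := by
  have hjm : w.length < m := lt_of_lt_of_le hlt hw'
  have := congrFun h ⟨w.length, hjm⟩
  rw [enc, enc] at this
  simp only [dif_neg (lt_irrefl w.length), dif_pos hlt] at this
  exact absurd this.symm (Fin.ne_of_lt (Fin.castSucc_lt_last _))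

theorem enc_inj {w w' : FreeMonoid (Fin n)} (hw : w.length ≤ m) (hw' : w'.length ≤ m)
    (h : enc n m w = enc n m w') : w = w' := by
  have hlen : w.length = w'.length := by
    rcases Nat.lt_trichotomy w.length w'.length with hl | hl | hl
    · exact absurd (enc_len_eq n m hw hl hw' h) id
    · exact hl
    · exact absurd (enc_len_eq n m hw' hl hw h.symm) id
  apply FreeMonoid.toList.injective
  apply List.ext_get hlen
  intro i h1 h2
  have him : i < m := lt_of_lt_of_le h1 hw
  have := congrFun h ⟨i, him⟩
  rw [enc, enc] at this
  have h1' : ((⟨i, him⟩ : Fin m) : ℕ) < w.length := h1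
  have h2' : ((⟨i, him⟩ : Fin m) : ℕ) < w'.length := h2
  rw [dif_pos h1', dif_pos h2'] at this
  exact Fin.castSucc_injective n this

end Enc

theorem degLE_zero (d : ℕ) : (0 : FA X) ∈ degLE X d := by
  intro w hw
  rw [coefficient_zero] at hw
  simp at hw

theorem degLE_add {d : ℕ} {P Q : FA X} (hP : P ∈ degLE X d) (hQ : Q ∈ degLE X d) :
    P + Q ∈ degLE X d := by
  intro w hw
  rw [Finsupp.mem_support_iff, coefficient_add, Finsupp.add_apply] at hw
  rcases Classical.em (coefficient P w = 0) with h | h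
  · exact hQ w (Finsupp.mem_support_iff.mpr (by intro h2; rw [h, h2] at hw; simp at hw))
  · exact hP w (Finsupp.mem_support_iff.mpr h)

theorem degLE_smul {d : ℕ} (c : ℂ) {P : FA X} (hP : P ∈ degLE X d) : c • P ∈ degLE X d := by
  intro w hw
  rw [Finsupp.mem_support_iff, coefficient_smul, Finsupp.smul_apply] at hw
  exact hP w (Finsupp.mem_support_iff.mpr (by intro h2; rw [h2] at hw; simp at hw))

theorem degLE_sum {d : ℕ} {ι : Type*} {s : Finset ι} {F : ι → FA X}
    (h : ∀ i ∈ s, F i ∈ degLE X d) : (∑ i ∈ s, F i) ∈ degLE X d := by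
  classical
  induction s using Finset.induction_on with
  | empty => simpa using degLE_zero d
  | insert _ _ hni ih =>
    rw [Finset.sum_insert hni]
    exact degLE_add (h _ (Finset.mem_insert_self _ _))
      (ih fun i hi => h i (Finset.mem_insert_of_mem hi))

theorem piW_degLE {d : ℕ} {w : FreeMonoid X} (hw : w.length ≤ d) : piW w ∈ degLE X d := by
  intro v hv
  rw [Finsupp.mem_support_iff] at hv
  have : coefficient (piW w) = Finsupp.single w 1 := congrArg MonoidAlgebra.coeff (T_piW w)
  rw [this] at hv
  classical
  have : v = w := by
    by_contra hne
    rw [Finsupp.single_apply] at hv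
    exact hv (if_neg (fun h => hne h.symm))
  rwa [this]

theorem sum_single_piW (Q : FA X) :
    Q = ∑ w ∈ (coefficient Q).support, coefficient Q w • piW w := by
  apply coeff_inj
  rw [coefficient_sum]
  have h1 : ∀ w ∈ (coefficient Q).support,
      coefficient (coefficient Q w • piW w) = Finsupp.single w (coefficient Q w) := by
    intro w _
    rw [coefficient_smul, show coefficient (piW w) = Finsupp.single w 1 from congrArg MonoidAlgebra.coeff (T_piW w)]
    show coefficient Q w • Finsupp.single w (1 : ℂ) = _
    rw [Finsupp.smul_single', mul_one]
  rw [Finset.sum_congr rfl h1]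
  conv_lhs => rw [← Finsupp.sum_single (coefficient Q)]
  rfl

section Part2
variable (n m L : ℕ)

def valid (f : Fin m → Fin (n + 1)) : Prop :=
  ∃ w : FreeMonoid (Fin n), w.length ≤ L ∧ enc n m w = f

open scoped Classical in
def eW (f : Fin m → Fin (n + 1)) : FA (Fin n) :=
  if h : valid n m L f then piW (Classical.choose h) else 0

open scoped Classical in
def wcoef (Q : FA (Fin n)) (f : Fin m → Fin (n + 1)) : ℂ :=
  if h : valid n m L f then coefficient Q (Classical.choose h) else 0

variable {n m L}

theorem choose_enc (hL : L ≤ m) {w : FreeMonoid (Fin n)} (hw : w.length ≤ L)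
    (h : valid n m L (enc n m w)) : Classical.choose h = w := by
  obtain ⟨h1, h2⟩ := Classical.choose_spec h
  exact enc_inj n m (le_trans h1 hL) (le_trans hw hL) h2

theorem eW_enc (hL : L ≤ m) {w : FreeMonoid (Fin n)} (hw : w.length ≤ L) :
    eW n m L (enc n m w) = piW w := by
  have h : valid n m L (enc n m w) := ⟨w, hw, rfl⟩
  rw [eW, dif_pos h, choose_enc hL hw h]

theorem wcoef_enc (hL : L ≤ m) (Q : FA (Fin n)) {w : FreeMonoid (Fin n)} (hw : w.length ≤ L) :
    wcoef n m L Q (enc n m w) = coefficient Q w := by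
  have h : valid n m L (enc n m w) := ⟨w, hw, rfl⟩
  rw [wcoef, dif_pos h, choose_enc hL hw h]

theorem eW_degLE (f : Fin m → Fin (n + 1)) : eW n m L f ∈ degLE (Fin n) L := by
  rw [eW]
  split
  · next h => exact piW_degLE (Classical.choose_spec h).1
  · exact degLE_zero L

theorem expand (hL : L ≤ m) {Q : FA (Fin n)} (hQ : Q ∈ degLE (Fin n) L) :
    Q = ∑ f : Fin m → Fin (n + 1), wcoef n m L Q f • eW n m L f := by
  classical
  have h1 : ∑ f : Fin m → Fin (n + 1), wcoef n m L Q f • eW n m L f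
      = ∑ f ∈ (coefficient Q).support.image (enc n m), wcoef n m L Q f • eW n m L f := by
    symm
    apply Finset.sum_subset (Finset.subset_univ _)
    intro f _ hf
    by_cases h : valid n m L f
    · have hcw : Classical.choose h ∉ (coefficient Q).support := by
        intro hmem
        exact hf (Finset.mem_image.mpr ⟨_, hmem, (Classical.choose_spec h).2⟩)
      rw [wcoef, dif_pos h, Finsupp.notMem_support_iff.mp hcw, zero_smul]
    · rw [wcoef, dif_neg h, zero_smul]
  rw [h1, Finset.sum_image
    (fun w hw w' hw' he => enc_inj n m (le_trans (hQ w hw) hL) (le_trans (hQ w' hw') hL) he)]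
  rw [Finset.sum_congr rfl
    (fun w hw => by rw [wcoef_enc hL Q (hQ w hw), eW_enc hL (hQ w hw)])]
  exact sum_single_piW Q

theorem sq_expand {ι : Type*} [Fintype ι] (c : ι → ℂ) (E : ι → FA X) :
    cstar (∑ g, c g • E g) * (∑ g, c g • E g)
      = ∑ f, ∑ g, ((starRingEnd ℂ) (c f) * c g) • (cstar (E f) * E g) := by
  rw [cstar_sum, Finset.sum_mul_sum]
  apply Finset.sum_congr rfl; intro f _
  apply Finset.sum_congr rfl; intro g _
  rw [cstar_smul, smul_mul_smul_comm]

open scoped ComplexOrder in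
theorem part2 {k : ℕ} (Q : Fin k → FA (Fin n)) (hQ : ∀ i, Q i ∈ degLE (Fin n) (m / 2)) :
    ∃ Ps : Fin ((n + 1) ^ m) → FA (Fin n),
      (∀ i, Ps i ∈ degLE (Fin n) (m / 2)) ∧
      (∑ i, cstar (Q i) * Q i) = ∑ i, cstar (Ps i) * Ps i := by
  classical
  have hL : m / 2 ≤ m := Nat.div_le_self m 2
  set a : Fin k → (Fin m → Fin (n + 1)) → ℂ := fun i f => wcoef n m (m / 2) (Q i) f with ha
  set E : (Fin m → Fin (n + 1)) → FA (Fin n) := eW n m (m / 2) with hE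
  have hexp : ∀ i, Q i = ∑ f, a i f • E f := fun i => expand hL (hQ i)
  set A : Matrix (Fin k) (Fin m → Fin (n + 1)) ℂ := Matrix.of a with hA
  obtain ⟨B, hB⟩ : ∃ B : Matrix (Fin m → Fin (n + 1)) (Fin m → Fin (n + 1)) ℂ,
      Matrix.conjTranspose A * A = Matrix.conjTranspose B * B := by
    open scoped MatrixOrder in
    exact CStarAlgebra.nonneg_iff_eq_star_mul_self.mp (Matrix.posSemidef_conjTranspose_mul_self A).nonneg
  set R : (Fin m → Fin (n + 1)) → FA (Fin n) := fun h => ∑ g, B h g • E g with hR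
  have hGram : ∀ f g, (∑ i, (starRingEnd ℂ) (a i f) * a i g)
      = ∑ h, (starRingEnd ℂ) (B h f) * B h g := by
    intro f g
    have h1 := congrFun (congrFun hB f) g
    simpa [Matrix.mul_apply, Matrix.conjTranspose_apply, hA, Matrix.of_apply] using h1
  have key : ∑ i, cstar (Q i) * Q i = ∑ h, cstar (R h) * R h := by
    calc ∑ i, cstar (Q i) * Q i
        = ∑ i, ∑ f, ∑ g, ((starRingEnd ℂ) (a i f) * a i g) • (cstar (E f) * E g) := by
          exact Finset.sum_congr rfl fun i _ => by rw [hexp i, sq_expand]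
      _ = ∑ f, ∑ i, ∑ g, ((starRingEnd ℂ) (a i f) * a i g) • (cstar (E f) * E g) :=
          Finset.sum_comm
      _ = ∑ f, ∑ g, (∑ i, (starRingEnd ℂ) (a i f) * a i g) • (cstar (E f) * E g) := by
          refine Finset.sum_congr rfl fun f _ => ?_
          rw [Finset.sum_comm]
          exact Finset.sum_congr rfl fun g _ => (Finset.sum_smul).symm
      _ = ∑ f, ∑ g, (∑ h, (starRingEnd ℂ) (B h f) * B h g) • (cstar (E f) * E g) := by
          exact Finset.sum_congr rfl fun f _ => Finset.sum_congr rfl fun g _ => by rw [hGram]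
      _ = ∑ f, ∑ h, ∑ g, ((starRingEnd ℂ) (B h f) * B h g) • (cstar (E f) * E g) := by
          refine Finset.sum_congr rfl fun f _ => ?_
          rw [Finset.sum_comm]
          exact Finset.sum_congr rfl fun g _ => Finset.sum_smul
      _ = ∑ h, ∑ f, ∑ g, ((starRingEnd ℂ) (B h f) * B h g) • (cstar (E f) * E g) :=
          Finset.sum_comm
      _ = ∑ h, cstar (R h) * R h :=
          Finset.sum_congr rfl fun h _ => (sq_expand (fun g => B h g) E).symm
  have hcard : Fintype.card (Fin m → Fin (n + 1)) = (n + 1) ^ m := by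
    simp
  set eqv : Fin ((n + 1) ^ m) ≃ (Fin m → Fin (n + 1)) :=
    (Fintype.equivFinOfCardEq hcard).symm with heqv
  refine ⟨fun i => R (eqv i), fun i => ?_, ?_⟩
  · exact degLE_sum fun g _ => degLE_smul _ (eW_degLE _)
  · rw [key]
    exact (Equiv.sum_comp eqv fun h => cstar (R h) * R h).symm

end Part2

/-- Caratheodory/Schmüdgen.  A sum of hermitian squares
`P ∈ ℂ⟨X₁,…,Xₙ⟩` of degree at most `m` can be written as a sum of `(n+1)^m`
hermitian squares `Pᵢ*Pᵢ` with each `Pᵢ` of degree at most `m/2`. -/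
theorem caratheodory_sum_of_squares (n m : ℕ) (P : FA (Fin n))
    (hdeg : P ∈ degLE (Fin n) m) (hQ : P ∈ Qcone (Fin n)) :
    ∃ Ps : Fin ((n + 1) ^ m) → FA (Fin n),
      (∀ i, Ps i ∈ degLE (Fin n) (m / 2)) ∧
      P = ∑ i, cstar (Ps i) * Ps i := by
  obtain ⟨k, Q, rfl⟩ := hQ
  exact part2 Q (part1 Q hdeg)
end
end

section
/- In ℂ⟨X₁,…,Xₙ⟩, the intersection of the cone of sums of hermitian squares with the span of commutators is trivial: Q(ℂ⟨X⟩) ∩ C_cyc = {0}. Equivalently, if a sum of hermitian squares Σᵢ Pᵢ*Pᵢ is a sum of commutators, then it is zero. -/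
noncomputable section

namespace NCAux

open FreeAlgebra
open scoped Matrix

variable {X : Type}

/-- Shorthand for the equivalence with the monoid algebra. -/
abbrev eqv (X : Type) : FA X ≃ₐ[ℂ] MonoidAlgebra ℂ (FreeMonoid X) :=
  FreeAlgebra.equivMonoidAlgebraFreeMonoid

/-- The product of generators corresponding to a word. -/
def wordP (u : FreeMonoid X) : FA X := (FreeMonoid.lift (FreeAlgebra.ι ℂ)) u

lemma wordP_one : wordP (1 : FreeMonoid X) = 1 := map_one _

lemma wordP_of_mul (x : X) (u : FreeMonoid X) :
    wordP (FreeMonoid.of x * u) = FreeAlgebra.ι ℂ x * wordP u := by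
  simp [wordP]

lemma eqv_ι (x : X) :
    eqv X (FreeAlgebra.ι ℂ x) = MonoidAlgebra.single (FreeMonoid.of x) (1:ℂ) := by
  simp [eqv, FreeAlgebra.equivMonoidAlgebraFreeMonoid]

lemma eqv_wordP (u : FreeMonoid X) :
    eqv X (wordP u) = MonoidAlgebra.single u (1:ℂ) := by
  refine FreeMonoid.recOn u ?_ ?_
  · rw [wordP_one, map_one]
    rfl
  · intro x xs ih
    rw [wordP_of_mul, map_mul, ih, eqv_ι]
    rw [MonoidAlgebra.single_mul_single, one_mul]

lemma eqv_symm_single (u : FreeMonoid X) (c : ℂ) :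
    (eqv X).symm (MonoidAlgebra.single u c) = c • wordP u := by
  apply (eqv X).injective
  rw [AlgEquiv.apply_symm_apply, map_smul, eqv_wordP, MonoidAlgebra.smul_single',
    mul_one]

lemma star_smul' (c : ℂ) (P : FA X) : star (c • P) = c • star P := by
  rw [Algebra.smul_def, star_mul, FreeAlgebra.star_algebraMap,
    ← Algebra.commutes, ← Algebra.smul_def]

lemma cstar_smul_wordP (c : ℂ) (u : FreeMonoid X) :
    cstar (c • wordP u) = (starRingEnd ℂ c) • wordP (star u) := by
  have hco : coefficient (c • wordP u) = Finsupp.single u c := by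
    rw [coefficient, map_smul]
    rw [show FreeAlgebra.equivMonoidAlgebraFreeMonoid (wordP u)
        = MonoidAlgebra.single u (1:ℂ) from eqv_wordP u]
    rw [MonoidAlgebra.smul_single', mul_one, MonoidAlgebra.coeff_single]
  rw [cstar, hco, Finsupp.mapRange_single]
  rw [show ((FreeAlgebra.equivMonoidAlgebraFreeMonoid (R := ℂ) (X := X)).symm
      (MonoidAlgebra.ofCoeff (Finsupp.single u (starRingEnd ℂ c)))) = (starRingEnd ℂ c) • wordP u from
    eqv_symm_single u _]
  rw [star_smul']
  congr 1
  -- star (wordP u) = wordP (star u)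
  refine FreeMonoid.recOn u ?_ ?_
  · simp [wordP_one]
  · intro x xs ih
    rw [wordP_of_mul, star_mul, ih, star_mul, FreeMonoid.star_of,
      FreeAlgebra.star_ι]
    rw [show wordP (star xs * FreeMonoid.of x)
      = wordP (star xs) * wordP (FreeMonoid.of x) from map_mul _ _ _]
    rfl

lemma cstar_add (P Q : FA X) : cstar (P + Q) = cstar P + cstar Q := by
  unfold cstar coefficient
  rw [map_add, MonoidAlgebra.coeff_add, Finsupp.mapRange_add (map_add (starRingEnd ℂ)),
    MonoidAlgebra.ofCoeff_add, map_add,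
    star_add]

lemma cstar_zero : cstar (0 : FA X) = 0 := by
  simp [cstar, coefficient]

lemma lift_wordP {N : Type} [Fintype N] [DecidableEq N]
    (A : X → Matrix N N ℂ) (u : FreeMonoid X) :
    (FreeAlgebra.lift ℂ A) (wordP u) = ((FreeMonoid.toList u).map A).prod := by
  refine FreeMonoid.recOn u ?_ ?_
  · rw [wordP_one, map_one]; rfl
  · intro x xs ih
    rw [wordP_of_mul, map_mul, FreeAlgebra.lift_ι_apply, ih,
      FreeMonoid.toList_of_mul, List.map_cons, List.prod_cons]

lemma toList_star (u : FreeMonoid X) :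
    FreeMonoid.toList (star u) = (FreeMonoid.toList u).reverse := rfl

/-- The key hermiticity lemma: if all matrices are hermitian then
`lift` intertwines `cstar` and conjugate transpose. -/
lemma lift_cstar {N : Type} [Fintype N] [DecidableEq N]
    (A : X → Matrix N N ℂ) (hA : ∀ x, (A x)ᴴ = A x) (P : FA X) :
    (FreeAlgebra.lift ℂ A) (cstar P) = ((FreeAlgebra.lift ℂ A) P)ᴴ := by
  have key : ∀ f : MonoidAlgebra ℂ (FreeMonoid X),
      (FreeAlgebra.lift ℂ A) (cstar ((eqv X).symm f))
        = ((FreeAlgebra.lift ℂ A) ((eqv X).symm f))ᴴ := by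
    intro f
    induction f using MonoidAlgebra.induction with
    | zero =>
      simp only [map_zero, cstar_zero, Matrix.conjTranspose_zero]
    | single_add u c g hu hc ih =>
      rw [map_add, cstar_add, map_add, map_add, Matrix.conjTranspose_add, ih]
      congr 1
      rw [eqv_symm_single, cstar_smul_wordP, map_smul, map_smul,
        lift_wordP, lift_wordP, Matrix.conjTranspose_smul]
      congr 1
      rw [Matrix.conjTranspose_list_prod, toList_star, List.map_reverse,
        List.map_map]
      simp [Function.comp_def, hA]
  have := key (eqv X P)
  rwa [AlgEquiv.symm_apply_apply] at this

/-- The hermitian "path" matrices associated to a word `l`. -/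
def Amat {n : ℕ} (l : List (Fin n)) (j : Fin n) :
    Matrix (Fin (l.length + 1)) (Fin (l.length + 1)) ℂ :=
  fun p q => (if (p:ℕ) + 1 = (q:ℕ) ∧ l[(p:ℕ)]? = some j then 1 else 0)
    + (if (q:ℕ) + 1 = (p:ℕ) ∧ l[(q:ℕ)]? = some j then 1 else 0)

lemma Amat_herm {n : ℕ} (l : List (Fin n)) (j : Fin n) :
    (Amat l j)ᴴ = Amat l j := by
  ext p q
  simp only [Matrix.conjTranspose_apply, Amat, star_add]
  rw [add_comm]
  congr 1 <;> (split_ifs <;> simp)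

lemma path_lemma {n : ℕ} (l : List (Fin n)) :
    ∀ (u : List (Fin n)) (p : Fin (l.length + 1)),
      (p : ℕ) + u.length ≤ l.length →
      ((u.map (Amat l)).prod).mulVec
          (fun q => if (q:ℕ) = l.length then 1 else 0) p
        = if (p:ℕ) + u.length = l.length ∧ u = l.drop (p:ℕ) then 1 else 0 := by
  intro u
  induction u with
  | nil =>
    intro p hp
    simp only [List.map_nil, List.prod_nil, Matrix.one_mulVec, List.length_nil,
      add_zero]
    rcases eq_or_ne ((p:ℕ)) l.length with h | h
    · simp [h, List.drop_length]
    · simp [h]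
  | cons j t ih =>
    intro p hp
    have hlen : (j :: t).length = t.length + 1 := rfl
    rw [hlen] at hp
    have hp1 : (p:ℕ) + 1 < l.length + 1 := by omega
    set p1 : Fin (l.length + 1) := ⟨(p:ℕ) + 1, hp1⟩ with hp1def
    have e1 : ((p1:ℕ)) = (p:ℕ) + 1 := rfl
    rw [List.map_cons, List.prod_cons, ← Matrix.mulVec_mulVec]
    rw [show (Matrix.mulVec (Amat l j)
        ((List.map (Amat l) t).prod.mulVec
          (fun q => if (q:ℕ) = l.length then 1 else 0))) p
      = ∑ q, Amat l j p q *
          ((List.map (Amat l) t).prod.mulVec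
            (fun q => if (q:ℕ) = l.length then 1 else 0)) q from rfl]
    rw [Finset.sum_eq_single p1]
    · rw [ih p1 (by rw [e1]; omega)]
      have hA1 : Amat l j p p1 = if l[(p:ℕ)]? = some j then 1 else 0 := by
        have c2 : ¬ ((p1:ℕ) + 1 = (p:ℕ)) := by omega
        simp only [Amat, e1, c2, false_and, if_false, add_zero, true_and]
        rw [if_neg (show ¬ ((p:ℕ) + 1 + 1 = (p:ℕ) ∧ l[(p:ℕ) + 1]? = some j) from
          fun h => absurd h.1 (by omega)), add_zero]
      rw [hA1, e1]
      by_cases hg : l[(p:ℕ)]? = some j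
      · rw [if_pos hg, one_mul]
        have hplt : (p:ℕ) < l.length := by omega
        have hdrop : l.drop (p:ℕ) = l.get ⟨(p:ℕ), hplt⟩ :: l.drop ((p:ℕ)+1) := by
          simpa using List.drop_eq_getElem_cons hplt
        have hgj : l.get ⟨(p:ℕ), hplt⟩ = j := by
          have h5 := List.getElem?_eq_getElem hplt
          rw [hg] at h5
          exact (Option.some_injective _ h5.symm)
        have harith : (p:ℕ) + 1 + t.length = (p:ℕ) + (t.length + 1) := by omega
        rw [hlen, hdrop, hgj, harith]
        simp [List.cons.injEq]
      · rw [if_neg hg, zero_mul]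
        have hcond : ¬ ((j :: t) = l.drop (p:ℕ)) := by
          intro hEq
          have hplt : (p:ℕ) < l.length := by
            by_contra hge
            rw [List.drop_eq_nil_of_le (by omega)] at hEq
            exact (List.cons_ne_nil _ _) hEq
          have hdrop : l.drop (p:ℕ) = l.get ⟨(p:ℕ), hplt⟩ :: l.drop ((p:ℕ)+1) := by
            simpa using List.drop_eq_getElem_cons hplt
          rw [hdrop] at hEq
          have hj : j = l.get ⟨(p:ℕ), hplt⟩ := by
            exact (List.cons_eq_cons.mp hEq).1
          apply hg
          rw [List.getElem?_eq_getElem hplt, hj]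
          simp
        rw [if_neg (fun hc => hcond hc.2)]
    · intro q _ hq
      by_cases h1 : (p:ℕ) + 1 = (q:ℕ)
      · exact absurd (Fin.ext (by omega : (q:ℕ) = (p1:ℕ))) hq
      · by_cases h2 : (q:ℕ) + 1 = (p:ℕ)
        · have hql : (q:ℕ) + t.length ≤ l.length := by omega
          rw [ih q hql]
          rw [if_neg (by rintro ⟨ha, -⟩; omega)]
          exact mul_zero _
        · have hz : Amat l j p q = 0 := by
            simp only [Amat, h1, h2, false_and, if_false, add_zero]
          rw [hz, zero_mul]
    · intro hmem
      exact absurd (Finset.mem_univ p1) hmem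

end NCAux

open scoped Matrix

/-- In `ℂ⟨X₁,…,Xₙ⟩`, a sum of hermitian squares which is a sum
of commutators is zero: `Q(ℂ⟨X⟩) ∩ C_cyc = {0}`. -/
theorem Qcone_inter_Ccyc (n : ℕ) :
    Qcone (Fin n) ∩ (Ccyc (Fin n) : Set (FA (Fin n))) = {0} := by
  classical
  apply Set.Subset.antisymm
  · rintro x ⟨⟨m, P, hx⟩, hcyc⟩
    rw [Set.mem_singleton_iff]
    by_contra hne
    set F : MonoidAlgebra ℂ (FreeMonoid (Fin n)) := NCAux.eqv (Fin n) x with hF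
    have hFne : F ≠ 0 := by
      intro h0
      apply hne
      have := congrArg (NCAux.eqv (Fin n)).symm (hF.symm.trans h0)
      rwa [AlgEquiv.symm_apply_apply, map_zero] at this
    have hsupp : F.coeff.support.Nonempty := Finsupp.support_nonempty_iff.mpr (MonoidAlgebra.coeff_eq_zero.not.mpr hFne)
    obtain ⟨w, hw, hwmax⟩ := Finset.exists_max_image F.coeff.support
      (fun u => (FreeMonoid.toList u).length) hsupp
    set l : List (Fin n) := FreeMonoid.toList w with hl
    set φ := FreeAlgebra.lift ℂ (NCAux.Amat l) with hφ
    -- the trace of `φ x` vanishes since `x` is a sum of commutators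
    have htr : Matrix.trace (φ x) = 0 := by
      refine Submodule.span_induction
        (p := fun y _ => Matrix.trace (φ y) = 0) ?_ ?_ ?_ ?_ hcyc
      · rintro y ⟨Py, Qy, rfl⟩
        rw [map_sub, map_mul, map_mul, Matrix.trace_sub, Matrix.trace_mul_comm,
          sub_self]
      · simp
      · intro a b _ _ ha hb
        rw [map_add, Matrix.trace_add, ha, hb, add_zero]
      · intro c a _ ha
        rw [map_smul, Matrix.trace_smul, ha, smul_zero]
    -- `φ x` is a sum of `Mᴴ * M`, hence zero
    have hform : φ x = ∑ i, ((φ (P i))ᴴ * φ (P i)) := by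
      rw [hx, map_sum]
      refine Finset.sum_congr rfl fun i _ => ?_
      rw [map_mul, NCAux.lift_cstar (NCAux.Amat l) (fun j => NCAux.Amat_herm l j)]
    have hM0 : ∀ i, φ (P i) = 0 := by
      have htr2 : ∑ i, (↑(∑ a, ∑ b, Complex.normSq (φ (P i) a b)) : ℂ) = 0 := by
        rw [← htr, hform, Matrix.trace_sum]
        refine Finset.sum_congr rfl fun i _ => ?_
        rw [Matrix.trace]
        push_cast
        rw [Finset.sum_comm]
        refine Finset.sum_congr rfl fun a _ => ?_
        rw [Matrix.diag_apply, Matrix.mul_apply]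
        refine Finset.sum_congr rfl fun b _ => ?_
        rw [Matrix.conjTranspose_apply, Complex.star_def,
          ← Complex.normSq_eq_conj_mul_self]
      rw [← Complex.ofReal_sum, Complex.ofReal_eq_zero] at htr2
      have hall := (Finset.sum_eq_zero_iff_of_nonneg (fun i _ =>
        Finset.sum_nonneg fun a _ => Finset.sum_nonneg fun b _ =>
          Complex.normSq_nonneg _)).mp htr2
      intro i
      have hi := hall i (Finset.mem_univ i)
      have hi2 := (Finset.sum_eq_zero_iff_of_nonneg (fun a _ =>
        Finset.sum_nonneg fun b _ => Complex.normSq_nonneg _)).mp hi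
      ext a b
      have hi3 := (Finset.sum_eq_zero_iff_of_nonneg
        (fun b _ => Complex.normSq_nonneg _)).mp (hi2 a (Finset.mem_univ a)) b
        (Finset.mem_univ b)
      simpa using Complex.normSq_eq_zero.mp hi3
    have hφ0 : φ x = 0 := by
      rw [hform]
      refine Finset.sum_eq_zero fun i _ => ?_
      rw [hM0 i, Matrix.conjTranspose_zero, mul_zero]
    -- now compute the `(0, l.length)` entry of `φ x`
    have hxsum : x = F.coeff.sum (fun u c => c • NCAux.wordP u) := by
      have h1 : x = (NCAux.eqv (Fin n)).symm F := by
        rw [hF, AlgEquiv.symm_apply_apply]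
      conv_lhs => rw [h1, ← MonoidAlgebra.sum_coeff_single F]
      rw [map_finsuppSum]
      exact Finsupp.sum_congr fun u _ => NCAux.eqv_symm_single u _
    set p0 : Fin (l.length + 1) := ⟨0, Nat.succ_pos _⟩ with hp0
    set pl : Fin (l.length + 1) := ⟨l.length, Nat.lt_succ_self _⟩ with hpl
    have hentry : (φ x) p0 pl = F.coeff w := by
      rw [hxsum, map_finsuppSum, Finsupp.sum]
      simp only [Matrix.sum_apply]
      have hterm : ∀ u ∈ F.coeff.support,
          ((φ ((F.coeff u) • NCAux.wordP u)) p0) pl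
            = if u = w then F.coeff u else 0 := by
        intro u hu
        rw [map_smul, NCAux.lift_wordP, Matrix.smul_apply]
        have hlen : (FreeMonoid.toList u).length ≤ l.length := by
          have := hwmax u hu
          simpa [hl] using this
        have hmv : (((FreeMonoid.toList u).map (NCAux.Amat l)).prod) p0 pl
            = (((FreeMonoid.toList u).map (NCAux.Amat l)).prod.mulVec
                (fun q => if (q:ℕ) = l.length then 1 else 0)) p0 := by
          rw [Matrix.mulVec, dotProduct]
          rw [Finset.sum_congr rfl (fun q _ => by
            rw [show (if ((q : Fin (l.length+1)):ℕ) = l.length then (1:ℂ) else 0)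
              = if q = pl then 1 else 0 from by
                congr 1
                simp [hpl, Fin.ext_iff]])]
          simp
        rw [hmv, NCAux.path_lemma l (FreeMonoid.toList u) p0 (by simpa [hp0] using hlen)]
        have hcond : (((p0:ℕ) + (FreeMonoid.toList u).length = l.length) ∧
            FreeMonoid.toList u = l.drop (p0:ℕ)) ↔ u = w := by
          constructor
          · rintro ⟨h1, h2⟩
            have hz : ((p0:ℕ)) = 0 := rfl
            rw [hz, List.drop_zero] at h2
            exact FreeMonoid.toList.injective (by rw [h2, hl])
          · rintro rfl
            simp [hl, hp0, Fin.ext_iff]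
        rw [if_congr hcond rfl rfl]
        by_cases h : u = w <;> simp [h]
      rw [Finset.sum_congr rfl hterm]
      rw [Finset.sum_ite_eq' F.coeff.support w (fun u => F.coeff u), if_pos hw]
    rw [hφ0] at hentry
    exact (Finsupp.mem_support_iff.mp hw) (by simpa using hentry.symm)
  · rintro x hx
    rw [Set.mem_singleton_iff] at hx
    subst hx
    refine ⟨⟨0, fun _ => 0, by simp⟩, (Ccyc (Fin n)).zero_mem⟩
end
end
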